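/- arXiv:1812.00566 — 11 statements merged into one kernel-verified Lean document; each statement's English description precedes it below -/
import Mathlib

section
/- If λ = (λ₁ ≥ λ₂ ≥ ... ≥ λ_r) is a partition and λ' is defined by λ'_i = i·λ_i + (λ_{i+1} + λ_{i+2} + ... + λ_r), then λ' is a sequentially congruent partition, i.e., λ'_i ≡ λ'_{i+1} (mod i) for 1 ≤ i ≤ r−1 and λ'_r ≡ 0 (mod r). -/
/-- A partition represented as a weakly decreasing list of positive integers. -/
def IsPartition (l : List ℕ) : Prop :=
  l.Pairwise (· ≥ ·) ∧ ∀ x ∈ l, 0 < x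

/-- Sequentially congruent: `λ_i ≡ λ_{i+1} (mod i)` for `1 ≤ i ≤ r-1` and `λ_r ≡ 0 (mod r)`
(0-indexed, with the convention `λ_{r+1} = 0`). -/
def SeqCongruent (l : List ℕ) : Prop :=
  ∀ j < l.length, l.getD j 0 ≡ l.getD (j+1) 0 [MOD j+1]

/-- The map `π`: `π(λ)_i = i·λ_i + Σ_{j=i+1}^r λ_j` (1-indexed). -/
def piMap (l : List ℕ) : List ℕ :=
  (List.range l.length).map (fun j => (j+1) * l.getD j 0 + (l.drop (j+1)).sum)

/-- The map `σ`: the partition in which `i` occurs with frequency `(φ_i - φ_{i+1})/i`. -/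
def sigmaMap (l : List ℕ) : List ℕ :=
  ((List.range l.length).reverse).flatMap
    (fun j => List.replicate ((l.getD j 0 - l.getD (j+1) 0) / (j+1)) (j+1))

/-- The conjugate partition: its `i`-th part is the number of parts of `l` that are `≥ i`. -/
def conj (l : List ℕ) : List ℕ :=
  (List.range (l.getD 0 0)).map (fun i => l.countP (fun x => decide (i + 1 ≤ x)))

/-- Frequency congruent: each part `i` occurs with frequency divisible by `i`. -/
def FreqCongruent (l : List ℕ) : Prop :=
  ∀ i, 0 < i → i ∣ l.count i

lemma piMap_getD (l : List ℕ) (j : ℕ) (hj : j < l.length) :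
    (piMap l).getD j 0 = (j+1) * l.getD j 0 + (l.drop (j+1)).sum := by
  rw [piMap, List.getD_eq_getElem]
  · simp
  · simpa using hj

lemma mul_add_modEq (n a x : ℕ) : n * a + x ≡ x [MOD n] := by
  calc n * a + x ≡ 0 + x [MOD n] :=
        Nat.ModEq.add_right x ((Nat.modEq_zero_iff_dvd).mpr (dvd_mul_right n a))
    _ = x := by ring

theorem stmt0 (l : List ℕ) (hl : IsPartition l) : SeqCongruent (piMap l) := by
  intro j hj
  have hlen : (piMap l).length = l.length := by simp [piMap]
  rw [hlen] at hj
  rw [piMap_getD l j hj]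
  rcases lt_or_ge (j+1) l.length with h | h
  · rw [piMap_getD l (j+1) h]
    have hdrop : l.drop (j+1) = l[j+1] :: l.drop (j+2) := List.drop_eq_getElem_cons h
    have hget : l.getD (j+1) 0 = l[j+1] := List.getD_eq_getElem l 0 h
    rw [hdrop, hget, List.sum_cons]
    calc (j+1) * l.getD j 0 + (l[j+1] + (l.drop (j+2)).sum)
        ≡ l[j+1] + (l.drop (j+2)).sum [MOD j+1] := mul_add_modEq _ _ _
      _ ≡ (j+1) * l[j+1] + (l[j+1] + (l.drop (j+2)).sum) [MOD j+1] :=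
          (mul_add_modEq _ _ _).symm
      _ = (j+1+1) * l[j+1] + (l.drop (j+2)).sum := by ring
  · have h' : j + 1 = l.length := by omega
    have : (piMap l).getD (j+1) 0 = 0 := by
      apply List.getD_eq_default
      omega
    rw [this, h', List.drop_length, List.sum_nil, add_zero]
    exact (Nat.modEq_zero_iff_dvd).mpr (dvd_mul_right _ _)
end

section
/- The map π defined by π(λ)_i = i·λ_i + Σ_{j=i+1}^{r} λ_j is injective on partitions: given a sequentially congruent partition λ', the original partition λ is uniquely recovered by λ_r = λ'_r / r and λ_i = (λ'_i − Σ_{j=i+1}^{r} λ_j)/i for i = r−1, ..., 1. -/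
theorem stmt3 (l₁ l₂ : List ℕ) (h₁ : IsPartition l₁) (h₂ : IsPartition l₂)
    (h : piMap l₁ = piMap l₂) : l₁ = l₂ := by
  have hlen : l₂.length = l₁.length := by
    have := congrArg List.length h
    simpa [piMap] using this.symm
  have key : ∀ j, j < l₁.length →
      (j+1) * l₁.getD j 0 + (l₁.drop (j+1)).sum
        = (j+1) * l₂.getD j 0 + (l₂.drop (j+1)).sum := by
    intro j hj
    have hj2 : j < l₂.length := hlen ▸ hj
    have := congrArg (fun t : List ℕ => t.getD j 0) h
    simpa [piMap, List.getD, List.getElem?_map, List.getElem?_range, hj, hj2] using this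
  have main : ∀ k, l₁.drop (l₁.length - k) = l₂.drop (l₁.length - k) := by
    intro k
    induction k with
    | zero =>
      simp only [Nat.sub_zero]
      rw [List.drop_length, ← hlen, List.drop_length]
    | succ k ih =>
      rcases le_or_gt l₁.length k with hk | hk
      · have h1 : l₁.length - k = 0 := Nat.sub_eq_zero_of_le hk
        have h2 : l₁.length - (k+1) = 0 := Nat.sub_eq_zero_of_le (le_trans hk (Nat.le_succ k))
        rw [h2, ← h1]; exact ih
      · set j := l₁.length - (k+1) with hjdef
        have hjlt : j < l₁.length := by omega
        have hjlt2 : j < l₂.length := hlen ▸ hjlt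
        have hstep : l₁.length - k = j + 1 := by omega
        rw [hstep] at ih
        have hget : l₁.getD j 0 = l₂.getD j 0 := by
          have hk2 := key j hjlt
          rw [ih] at hk2
          have := Nat.add_right_cancel hk2
          exact Nat.eq_of_mul_eq_mul_left (Nat.succ_pos j) this
        rw [List.drop_eq_getElem_cons hjlt, List.drop_eq_getElem_cons hjlt2, ih]
        congr 1
        have g1 : l₁[j] = l₁.getD j 0 := (List.getD_eq_getElem l₁ 0 hjlt).symm
        have g2 : l₂[j] = l₂.getD j 0 := (List.getD_eq_getElem l₂ 0 hjlt2).symm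
        rw [g1, g2, hget]
  have := main l₁.length
  simpa using this
end

section
/- The map π given by π(λ)_i = i·λ_i + Σ_{j=i+1}^{r} λ_j is a bijection from the set of all partitions of n onto the set of sequentially congruent partitions whose largest part equals n. -/
def piA (k : ℕ) : List ℕ → List ℕ
  | [] => []
  | a :: l => ((k+1) * a + l.sum) :: piA (k+1) l

def de (k : ℕ) : List ℕ → List ℕ
  | [] => []
  | a :: l => ((a - l.headD 0) / (k+1) + (de (k+1) l).headD 0) :: de (k+1) l

lemma piA_eq (l : List ℕ) : ∀ k, piA k l =
    (List.range l.length).map (fun j => (j+1+k) * l.getD j 0 + (l.drop (j+1)).sum) := by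
  induction l with
  | nil => intro k; simp [piA]
  | cons a t ih =>
    intro k
    simp only [piA, List.length_cons, List.range_succ_eq_map, List.map_cons, List.map_map]
    congr 1
    · simp [Nat.add_comm]
    · rw [ih (k+1)]
      apply List.map_congr_left
      intro j hj
      simp only [Function.comp_apply, Nat.succ_eq_add_one, List.getD_cons_succ,
        List.drop_succ_cons]
      ring_nf

lemma piMap_eq_piA (l : List ℕ) : piMap l = piA 0 l := by
  rw [piA_eq]; rfl

lemma piA_length (k : ℕ) (l : List ℕ) : (piA k l).length = l.length := by
  induction l generalizing k with
  | nil => rfl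
  | cons a t ih => simp [piA, ih]

lemma de_length (k : ℕ) (l : List ℕ) : (de k l).length = l.length := by
  induction l generalizing k with
  | nil => rfl
  | cons a t ih => simp [de, ih]

lemma headD_eq_getD (l : List ℕ) : l.headD 0 = l.getD 0 0 := by cases l <;> rfl

lemma sum_eq_headD_add_tail (l : List ℕ) : l.sum = l.headD 0 + l.tail.sum := by
  cases l <;> simp

lemma piA_step (l : List ℕ) (P : ∀ j, l.getD (j+1) 0 ≤ l.getD j 0) :
    ∀ k j, ∃ c, (piA k l).getD j 0 = (piA k l).getD (j+1) 0 + (j+1+k) * c := by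
  induction l with
  | nil => intro k j; exact ⟨0, by simp [piA]⟩
  | cons a t ih =>
    intro k j
    match j with
    | 0 =>
      match t with
      | [] =>
        refine ⟨a, ?_⟩
        simp only [piA, List.getD_cons_zero, List.getD_cons_succ, List.getD_nil, List.sum_nil]
        ring
      | b :: s =>
        have hb : b ≤ a := by simpa using P 0
        obtain ⟨d, rfl⟩ := Nat.le.dest hb
        refine ⟨d, ?_⟩
        simp [piA, Nat.add_sub_cancel_left]
        ring
    | j + 1 =>
      have P' : ∀ i, t.getD (i+1) 0 ≤ t.getD i 0 := fun i => P (i+1)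
      obtain ⟨c, hc⟩ := ih P' (k+1) j
      refine ⟨c, ?_⟩
      simp only [piA, List.getD_cons_succ]
      rw [hc]; ring

lemma de_piA (l : List ℕ) (P : ∀ j, l.getD (j+1) 0 ≤ l.getD j 0) :
    ∀ k, de k (piA k l) = l := by
  induction l with
  | nil => intro k; rfl
  | cons a t ih =>
    intro k
    have P' : ∀ i, t.getD (i+1) 0 ≤ t.getD i 0 := fun i => P (i+1)
    have iht := ih P' (k+1)
    simp only [piA, de, iht]
    congr 1
    match t with
    | [] => simp [piA, Nat.mul_div_cancel_left _ (Nat.succ_pos k)]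
    | b :: s =>
      have hb : b ≤ a := by simpa using P 0
      obtain ⟨d, rfl⟩ := Nat.le.dest hb
      have e : (k+1) * (b+d) + (b :: s).sum - ((piA (k+1) (b :: s)).headD 0) = (k+1) * d := by
        simp [piA]
        have : (k+1) * (b+d) + (b + s.sum) = ((k+1+1) * b + s.sum) + (k+1) * d := by ring
        omega
      rw [e, Nat.mul_div_cancel_left _ (Nat.succ_pos k)]
      simp [Nat.add_comm]

lemma de_head_sum (l : List ℕ) :
    ∀ k, (∀ j, (j+1+k) ∣ l.getD j 0 - l.getD (j+1) 0) →
    (∀ j, l.getD (j+1) 0 ≤ l.getD j 0) →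
    (k+1) * (de k l).headD 0 + (de k l).tail.sum = l.headD 0 := by
  induction l with
  | nil => intro k _ _; simp [de]
  | cons a t ih =>
    intro k H P
    have H' : ∀ j, (j+1+(k+1)) ∣ t.getD j 0 - t.getD (j+1) 0 := by
      intro j
      have e : j+1+(k+1) = (j+1)+1+k := by omega
      rw [e]
      simpa using H (j+1)
    have P' : ∀ j, t.getD (j+1) 0 ≤ t.getD j 0 := fun j => P (j+1)
    have iht := ih (k+1) H' P'
    have hd0 : (a :: t).getD 1 0 = t.headD 0 := by rw [headD_eq_getD]; rfl
    have hle : t.headD 0 ≤ a := by have := P 0; rwa [hd0] at this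
    have hdvd : (k+1) ∣ a - t.headD 0 := by
      have := H 0
      simp only [List.getD_cons_zero, hd0] at this
      have e : 0+1+k = k+1 := by omega
      rwa [e] at this
    obtain ⟨c, hc⟩ := hdvd
    have hsub : (a - t.headD 0) / (k+1) = c := by
      rw [hc, Nat.mul_div_cancel_left _ (Nat.succ_pos k)]
    simp only [de, List.headD_cons, List.tail_cons]
    rw [hsub]
    have hsum : (de (k+1) t).sum = (de (k+1) t).headD 0 + (de (k+1) t).tail.sum :=
      sum_eq_headD_add_tail _
    set h := (de (k+1) t).headD 0 with hh
    calc (k+1) * (c + h) + (de (k+1) t).sum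
        = (k+1) * c + ((k+1+1) * h + (de (k+1) t).tail.sum) := by rw [hsum]; ring
      _ = (k+1) * c + t.headD 0 := by rw [iht]
      _ = a := by omega

lemma piA_de (l : List ℕ) :
    ∀ k, (∀ j, (j+1+k) ∣ l.getD j 0 - l.getD (j+1) 0) →
    (∀ j, l.getD (j+1) 0 ≤ l.getD j 0) →
    piA k (de k l) = l := by
  induction l with
  | nil => intro k _ _; rfl
  | cons a t ih =>
    intro k H P
    have H' : ∀ j, (j+1+(k+1)) ∣ t.getD j 0 - t.getD (j+1) 0 := by
      intro j
      have e : j+1+(k+1) = (j+1)+1+k := by omega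
      rw [e]
      simpa using H (j+1)
    have P' : ∀ j, t.getD (j+1) 0 ≤ t.getD j 0 := fun j => P (j+1)
    have hc := de_head_sum (a :: t) k H P
    simp only [de, List.headD_cons, List.tail_cons] at hc
    simp only [de, piA, ih (k+1) H' P']
    rw [hc]

lemma piA_pos (l : List ℕ) (hp : ∀ x ∈ l, 0 < x) :
    ∀ k, ∀ x ∈ piA k l, 0 < x := by
  induction l with
  | nil => intro k x hx; simp [piA] at hx
  | cons a t ih =>
    intro k x hx
    simp only [piA, List.mem_cons] at hx
    rcases hx with rfl | hx
    · have ha : 0 < a := hp a List.mem_cons_self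
      calc 0 < a := ha
        _ ≤ (k+1) * a := Nat.le_mul_of_pos_left a (Nat.succ_pos k)
        _ ≤ (k+1) * a + t.sum := Nat.le_add_right _ _
    · exact ih (fun y hy => hp y (List.mem_cons_of_mem a hy)) (k+1) x hx

lemma de_pos (l : List ℕ) :
    ∀ k, (∀ j, (j+1+k) ∣ l.getD j 0 - l.getD (j+1) 0) →
    (∀ x ∈ l, 0 < x) → ∀ x ∈ de k l, 0 < x := by
  induction l with
  | nil => intro k _ _ x hx; simp [de] at hx
  | cons a t ih =>
    intro k H hp x hx
    simp only [de, List.mem_cons] at hx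
    have H' : ∀ j, (j+1+(k+1)) ∣ t.getD j 0 - t.getD (j+1) 0 := by
      intro j
      have e : j+1+(k+1) = (j+1)+1+k := by omega
      rw [e]
      simpa using H (j+1)
    rcases hx with rfl | hx
    · match t with
      | [] =>
        have hdvd : (k+1) ∣ a := by
          have := H 0
          simp only [List.getD_cons_zero] at this
          have e : 0+1+k = k+1 := by omega
          rw [e] at this
          simpa using this
        have ha : 0 < a := hp a List.mem_cons_self
        have : 0 < a / (k+1) := Nat.div_pos (Nat.le_of_dvd ha hdvd) (Nat.succ_pos k)
        simpa [de] using this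
      | b :: s =>
        have hne : de (k+1) (b :: s) ≠ [] := by simp [de]
        obtain ⟨y, ys, hys⟩ := List.exists_cons_of_ne_nil hne
        have hy : 0 < y := by
          refine ih (k+1) H' (fun z hz => hp z (List.mem_cons_of_mem a hz)) y ?_
          rw [hys]; exact List.mem_cons_self
        rw [hys]
        simp only [List.headD_cons]
        exact Nat.lt_of_lt_of_le hy (Nat.le_add_left y _)
    · exact ih (k+1) H' (fun z hz => hp z (List.mem_cons_of_mem a hz)) x hx

lemma de_chain (l : List ℕ) : ∀ k, List.IsChain (· ≥ ·) (de k l) := by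
  induction l with
  | nil => intro k; simp [de]
  | cons a t ih =>
    intro k
    simp only [de]
    refine List.isChain_cons.mpr ⟨?_, ih (k+1)⟩
    intro y hy
    have : (de (k+1) t).headD 0 = y := by
      rw [List.headD_eq_head?_getD, hy]; rfl
    rw [← this]
    exact Nat.le_add_left _ _

lemma sorted_getD_le (l : List ℕ) (hs : l.Pairwise (· ≥ ·)) :
    ∀ j, l.getD (j+1) 0 ≤ l.getD j 0 := by
  intro j
  by_cases hj : j + 1 < l.length
  · have hj' : j < l.length := Nat.lt_of_succ_lt hj
    rw [List.getD_eq_getElem l 0 hj, List.getD_eq_getElem l 0 hj']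
    have := List.pairwise_iff_get.mp hs ⟨j, hj'⟩ ⟨j+1, hj⟩ (by simp)
    simpa using this
  · rw [List.getD_eq_default l 0 (le_of_not_gt hj)]
    exact Nat.zero_le _

lemma sorted_of_getD (l : List ℕ) (h : ∀ j, l.getD (j+1) 0 ≤ l.getD j 0) :
    l.Pairwise (· ≥ ·) := by
  rw [← List.isChain_iff_pairwise]
  rw [List.isChain_iff_getElem]
  intro i hi
  have h1 : i < l.length := by omega
  have h2 : i + 1 < l.length := by omega
  have := h i
  rw [List.getD_eq_getElem l 0 h2, List.getD_eq_getElem l 0 h1] at this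
  simpa using this

lemma piA_head_sum (l : List ℕ) : (piA 0 l).getD 0 0 = l.sum := by
  cases l <;> simp [piA]

theorem stmt4 (n : ℕ) :
    Set.BijOn piMap {l : List ℕ | IsPartition l ∧ l.sum = n}
      {l : List ℕ | IsPartition l ∧ SeqCongruent l ∧ l.getD 0 0 = n} := by
  constructor
  · -- MapsTo
    rintro l ⟨⟨hs, hp⟩, hsum⟩
    have P := sorted_getD_le l hs
    have D := piA_step l P
    refine ⟨⟨?_, ?_⟩, ?_, ?_⟩
    · rw [piMap_eq_piA]
      apply sorted_of_getD
      intro j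
      obtain ⟨c, hc⟩ := D 0 j
      rw [hc]; exact Nat.le_add_right _ _
    · rw [piMap_eq_piA]; exact piA_pos l hp 0
    · intro j hj
      obtain ⟨c, hc⟩ := D 0 j
      show _ ≡ _ [MOD _]
      rw [piMap_eq_piA, Nat.ModEq, hc]
      simp [Nat.add_mul_mod_self_left]
    · rw [piMap_eq_piA, piA_head_sum]; exact hsum
  constructor
  · -- InjOn
    rintro l1 ⟨⟨hs1, _⟩, _⟩ l2 ⟨⟨hs2, _⟩, _⟩ heq
    calc l1 = de 0 (piA 0 l1) := (de_piA l1 (sorted_getD_le l1 hs1) 0).symm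
      _ = de 0 (piA 0 l2) := by rw [← piMap_eq_piA, ← piMap_eq_piA, heq]
      _ = l2 := de_piA l2 (sorted_getD_le l2 hs2) 0
  · -- SurjOn
    rintro μ ⟨⟨hs, hp⟩, hsc, hn⟩
    have P := sorted_getD_le μ hs
    have H : ∀ j, (j+1+0) ∣ μ.getD j 0 - μ.getD (j+1) 0 := by
      intro j
      rw [Nat.add_zero]
      by_cases hj : j < μ.length
      · exact (Nat.modEq_iff_dvd' (P j)).mp (hsc j hj).symm
      · have h1 : μ.getD j 0 = 0 := List.getD_eq_default _ _ (le_of_not_gt hj)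
        rw [h1]
        simp
    refine ⟨de 0 μ, ⟨⟨?_, ?_⟩, ?_⟩, ?_⟩
    · exact List.isChain_iff_pairwise.mp (de_chain μ 0)
    · exact de_pos μ 0 H hp
    · have hc := de_head_sum μ 0 H P
      have hsum := sum_eq_headD_add_tail (de 0 μ)
      have hμ0 : μ.headD 0 = n := by rw [headD_eq_getD]; exact hn
      omega
    · rw [piMap_eq_piA]; exact piA_de μ 0 H P
end

section
/- The number of sequentially congruent partitions with largest part equal to n is p(n), the number of partitions of n. -/
namespace SC5

/-- Forward multiset: part `j+1` with multiplicity `(λ_j - λ_{j+1})/(j+1)`. -/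
def fm (l : List ℕ) : Multiset ℕ :=
  ∑ j ∈ Finset.range l.length,
    Multiset.replicate ((l.getD j 0 - l.getD (j+1) 0) / (j+1)) (j+1)

/-- Inverse list: `λ_i = ∑_{k ≥ i+1, k ∈ μ} k`. -/
def gl (μ : Multiset ℕ) : List ℕ :=
  (List.range μ.sup).map (fun i => (μ.filter (fun k => i+1 ≤ k)).sum)

lemma tele (a : ℕ → ℕ) (ha : ∀ j, a (j+1) ≤ a j) {i k : ℕ} (hik : i ≤ k) :
    ∑ j ∈ Finset.Ico i k, (a j - a (j+1)) = a i - a k := by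
  have hanti : Antitone a := antitone_nat_of_succ_le ha
  induction k with
  | zero =>
    have : i = 0 := by omega
    subst this; simp
  | succ k ih =>
    rcases Nat.lt_or_ge i (k+1) with h | h
    · have hik' : i ≤ k := by omega
      rw [Finset.sum_Ico_succ_top hik', ih hik']
      have h1 : a (k+1) ≤ a k := ha k
      have h2 : a k ≤ a i := hanti hik'
      omega
    · have : i = k+1 := by omega
      subst this; simp

lemma filter_finsum {ι : Type*} (s : Finset ι) (f : ι → Multiset ℕ) (p : ℕ → Prop)
    [DecidablePred p] : (∑ i ∈ s, f i).filter p = ∑ i ∈ s, (f i).filter p := by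
  classical
  induction s using Finset.induction with
  | empty => simp
  | insert _ _ h ih => simp [Finset.sum_insert h, Multiset.filter_add, ih]

section forward

variable {l : List ℕ} (hl : IsPartition l ∧ SeqCongruent l ∧ l.getD 0 0 = l.getD 0 0)

/-- `getD` is antitone for a sorted list. -/
lemma getD_anti (hs : l.Pairwise (· ≥ ·)) (j : ℕ) : l.getD (j+1) 0 ≤ l.getD j 0 := by
  rcases Nat.lt_or_ge (j+1) l.length with h | h
  · rw [List.getD_eq_getElem l 0 h, List.getD_eq_getElem l 0 (by omega)]
    exact List.pairwise_iff_getElem.mp hs j (j+1) (by omega) h (by omega)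
  · rw [List.getD_eq_default l 0 h]
    exact Nat.zero_le _

lemma sc_dvd (hs : l.Pairwise (· ≥ ·)) (hc : SeqCongruent l) (j : ℕ) :
    (j+1) ∣ l.getD j 0 - l.getD (j+1) 0 := by
  rcases Nat.lt_or_ge j l.length with h | h
  · exact (Nat.modEq_iff_dvd' (getD_anti hs j)).mp (hc j h).symm
  · rw [List.getD_eq_default l 0 h, List.getD_eq_default l 0 (by omega)]
    simp

lemma fm_sum (hs : l.Pairwise (· ≥ ·)) (hc : SeqCongruent l) :
    (fm l).sum = l.getD 0 0 := by
  unfold fm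
  have hms : ∀ {s : Finset ℕ} (f : ℕ → Multiset ℕ), (∑ j ∈ s, f j).sum = ∑ j ∈ s, (f j).sum := by
    intro s f
    exact map_sum Multiset.sumAddMonoidHom f s
  rw [hms]
  simp only [Multiset.sum_replicate, smul_eq_mul]
  have : ∀ j ∈ Finset.range l.length,
      (l.getD j 0 - l.getD (j+1) 0) / (j+1) * (j+1) = l.getD j 0 - l.getD (j+1) 0 := by
    intro j _
    exact Nat.div_mul_cancel (sc_dvd hs hc j)
  rw [Finset.sum_congr rfl this]
  have := tele (fun j => l.getD j 0) (getD_anti hs) (Nat.zero_le l.length)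
  rw [Finset.range_eq_Ico, this]
  have h0 : l.getD l.length 0 = 0 := List.getD_eq_default l 0 le_rfl
  beta_reduce
  omega

lemma fm_mem {x : ℕ} (hx : x ∈ fm l) : 0 < x ∧ x ≤ l.length := by
  rw [fm, Multiset.mem_sum] at hx
  obtain ⟨j, hj, hxj⟩ := hx
  rw [Multiset.eq_of_mem_replicate hxj]
  simp at hj; omega

lemma fm_filter_sum (hs : l.Pairwise (· ≥ ·)) (hc : SeqCongruent l) (i : ℕ) :
    ((fm l).filter (fun k => i+1 ≤ k)).sum = l.getD i 0 := by
  rw [fm, filter_finsum]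
  have heq : ∀ j ∈ Finset.range l.length,
      (Multiset.replicate ((l.getD j 0 - l.getD (j+1) 0) / (j+1)) (j+1)).filter
        (fun k => i+1 ≤ k)
      = if i ≤ j then Multiset.replicate ((l.getD j 0 - l.getD (j+1) 0) / (j+1)) (j+1)
        else 0 := by
    intro j _
    split
    · rw [Multiset.filter_eq_self]
      intro a ha
      rw [Multiset.eq_of_mem_replicate ha]; omega
    · rw [Multiset.filter_eq_nil]
      intro a ha
      rw [Multiset.eq_of_mem_replicate ha]; omega
  rw [Finset.sum_congr rfl heq]
  have hms : ∀ {s : Finset ℕ} (f : ℕ → Multiset ℕ), (∑ j ∈ s, f j).sum = ∑ j ∈ s, (f j).sum := by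
    intro s f
    exact map_sum Multiset.sumAddMonoidHom f s
  rw [hms]
  have : ∀ j ∈ Finset.range l.length,
      (if i ≤ j then Multiset.replicate ((l.getD j 0 - l.getD (j+1) 0) / (j+1)) (j+1)
        else 0).sum = if i ≤ j then l.getD j 0 - l.getD (j+1) 0 else 0 := by
    intro j _
    split
    · rw [Multiset.sum_replicate, smul_eq_mul, Nat.div_mul_cancel (sc_dvd hs hc j)]
    · simp
  rw [Finset.sum_congr rfl this, ← Finset.sum_filter]
  have hfil : Finset.filter (fun j => i ≤ j) (Finset.range l.length)
      = Finset.Ico i l.length := by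
    ext x; simp [Finset.mem_filter, Finset.mem_Ico]; omega
  rw [hfil]
  rcases le_or_gt i l.length with h | h
  · rw [tele (fun j => l.getD j 0) (getD_anti hs) h]
    have h0 : l.getD l.length 0 = 0 := List.getD_eq_default l 0 le_rfl
    omega
  · rw [Finset.Ico_eq_empty (by omega), List.getD_eq_default l 0 (by omega)]
    simp

end forward

lemma fm_max (hs : l.Pairwise (· ≥ ·)) (hp : ∀ x ∈ l, 0 < x) (hc : SeqCongruent l) :
    (fm l).sup = l.length := by
  rcases Nat.eq_zero_or_pos l.length with h0 | h0
  · have : fm l = 0 := by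
      unfold fm; rw [h0]; simp
    rw [this, h0]; rfl
  refine le_antisymm (Multiset.sup_le.mpr fun x hx => (fm_mem hx).2) ?_
  refine Multiset.le_sup ?_
  rw [fm, Multiset.mem_sum]
  refine ⟨l.length - 1, by simp; omega, ?_⟩
  have hlt : l.length - 1 < l.length := by omega
  have hpos : 0 < l.getD (l.length - 1) 0 := by
    rw [List.getD_eq_getElem l 0 hlt]
    exact hp _ (List.getElem_mem hlt)
  have hz : l.getD (l.length - 1 + 1) 0 = 0 :=
    List.getD_eq_default l 0 (by omega)
  have hdvd := sc_dvd hs hc (l.length - 1)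
  rw [hz, Nat.sub_zero] at hdvd
  rw [Multiset.mem_replicate]
  refine ⟨?_, by omega⟩
  rw [hz, Nat.sub_zero]
  have h1 := Nat.le_of_dvd hpos hdvd
  have h2 := Nat.div_pos h1 (by omega : 0 < l.length - 1 + 1)
  omega

/-- The entries of the inverse map. -/
def bfun (μ : Multiset ℕ) (i : ℕ) : ℕ := (μ.filter (fun k => i+1 ≤ k)).sum

lemma b_step (μ : Multiset ℕ) (i : ℕ) :
    bfun μ i = (i+1) * μ.count (i+1) + bfun μ (i+1) := by
  unfold bfun
  induction μ using Multiset.induction with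
  | empty => simp
  | cons a s ih =>
    rw [Multiset.filter_cons, Multiset.filter_cons, Multiset.count_cons]
    by_cases h1 : a = i+1
    · subst h1
      rw [if_pos (le_refl (i+1)), if_neg (by omega : ¬ (i+1+1 ≤ i+1)),
        if_pos (rfl : i+1 = i+1), Multiset.sum_add, Multiset.sum_singleton,
        Nat.mul_succ, zero_add]
      omega
    · by_cases h2 : i+2 ≤ a
      · rw [if_pos (by omega : i+1 ≤ a), if_pos (by omega : i+1+1 ≤ a),
          if_neg (fun h => h1 h.symm), Multiset.sum_add, Multiset.sum_add,
          Multiset.sum_singleton, add_zero]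
        omega
      · rw [if_neg (by omega : ¬ (i+1 ≤ a)), if_neg (by omega : ¬ (i+1+1 ≤ a)),
          if_neg (fun h => h1 h.symm), zero_add, zero_add, add_zero]
        omega

lemma b_anti (μ : Multiset ℕ) (i : ℕ) : bfun μ (i+1) ≤ bfun μ i := by
  have := b_step μ i; omega

lemma b_zero (μ : Multiset ℕ) {i : ℕ} (h : μ.sup ≤ i) : bfun μ i = 0 := by
  unfold bfun
  have : Multiset.filter (fun k => i+1 ≤ k) μ = 0 := by
    rw [Multiset.filter_eq_nil]
    intro a ha
    have := Multiset.le_sup ha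
    omega
  rw [this]; rfl

lemma b_pos (μ : Multiset ℕ) {i : ℕ} (h : i < μ.sup) : 0 < bfun μ i := by
  by_contra hb
  push_neg at hb
  have hb0 : bfun μ i = 0 := by omega
  have : μ.sup ≤ i := by
    rw [Multiset.sup_le]
    intro k hk
    by_contra hki
    push_neg at hki
    have hkf : k ∈ Multiset.filter (fun k => i+1 ≤ k) μ :=
      Multiset.mem_filter.mpr ⟨hk, by omega⟩
    have := Multiset.single_le_sum (fun x _ => Nat.zero_le x) k hkf
    unfold bfun at hb0
    omega
  omega

lemma gl_length (μ : Multiset ℕ) : (gl μ).length = μ.sup := by simp [gl]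

lemma gl_getD (μ : Multiset ℕ) (i : ℕ) : (gl μ).getD i 0 = bfun μ i := by
  rcases Nat.lt_or_ge i μ.sup with h | h
  · rw [List.getD_eq_getElem _ 0 (by rw [gl_length]; exact h)]
    simp [gl, bfun]
  · rw [List.getD_eq_default _ 0 (by rw [gl_length]; exact h), b_zero μ h]

lemma gl_mem (μ : Multiset ℕ) (hp : ∀ x ∈ μ, 0 < x) :
    IsPartition (gl μ) ∧ SeqCongruent (gl μ) ∧ (gl μ).getD 0 0 = μ.sum := by
  have hanti : Antitone (bfun μ) := antitone_nat_of_succ_le (b_anti μ)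
  refine ⟨⟨?_, ?_⟩, ?_, ?_⟩
  · rw [List.pairwise_iff_getElem]
    intro i j hi hj hij
    simp only [gl, List.getElem_map, List.getElem_range] at *
    exact hanti (le_of_lt hij)
  · intro x hx
    simp only [gl, List.mem_map, List.mem_range] at hx
    obtain ⟨i, hi, rfl⟩ := hx
    exact b_pos μ hi
  · intro j hj
    rw [gl_length] at hj
    rw [gl_getD, gl_getD]
    have hdvd : (j+1) ∣ bfun μ j - bfun μ (j+1) := by
      refine ⟨μ.count (j+1), ?_⟩
      have := b_step μ j
      omega
    exact ((Nat.modEq_iff_dvd' (b_anti μ j)).mpr hdvd).symm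
  · rw [gl_getD]
    unfold bfun
    rw [Multiset.filter_eq_self.mpr]
    intro a ha
    have := hp a ha
    omega

lemma glfm (hs : l.Pairwise (· ≥ ·)) (hp : ∀ x ∈ l, 0 < x) (hc : SeqCongruent l) :
    gl (fm l) = l := by
  have hlen : (gl (fm l)).length = l.length := by
    rw [gl_length, fm_max hs hp hc]
  refine List.ext_getElem hlen ?_
  intro i h1 h2
  rw [← List.getD_eq_getElem (gl (fm l)) 0 h1, ← List.getD_eq_getElem l 0 h2]
  rw [gl_getD]
  exact fm_filter_sum hs hc i

lemma fmgl (μ : Multiset ℕ) (hp : ∀ x ∈ μ, 0 < x) : fm (gl μ) = μ := by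
  ext c
  rw [fm, Multiset.count_sum']
  have hlen : (gl μ).length = μ.sup := gl_length μ
  have hterm : ∀ j ∈ Finset.range (gl μ).length,
      Multiset.count c (Multiset.replicate
        (((gl μ).getD j 0 - (gl μ).getD (j+1) 0) / (j+1)) (j+1))
      = if j+1 = c then μ.count (j+1) else 0 := by
    intro j _
    rw [Multiset.count_replicate, gl_getD, gl_getD]
    have hstep := b_step μ j
    have : (bfun μ j - bfun μ (j+1)) / (j+1) = μ.count (j+1) := by
      have heq : bfun μ j - bfun μ (j+1) = (j+1) * μ.count (j+1) := by omega
      rw [heq, Nat.mul_div_cancel_left _ (by omega)]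
    rw [this]
  rw [Finset.sum_congr rfl hterm, hlen]
  rcases Nat.eq_zero_or_pos c with rfl | hc0
  · rw [Finset.sum_eq_zero (fun j _ => by rw [if_neg (by omega)])]
    exact (Multiset.count_eq_zero.mpr (fun h => by have := hp 0 h; omega)).symm
  rcases Nat.lt_or_ge μ.sup c with hbig | hle
  · rw [Finset.sum_eq_zero (fun j hj => by
      rw [if_neg]; simp at hj; omega)]
    refine (Multiset.count_eq_zero.mpr (fun h => ?_)).symm
    have := Multiset.le_sup h
    omega
  · rw [Finset.sum_eq_single (c-1)]
    · have hc1 : c - 1 + 1 = c := by omega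
      rw [if_pos hc1, hc1]
    · intro b _ hb
      rw [if_neg (by omega)]
    · intro hmem
      rw [Finset.mem_range, not_lt] at hmem
      exfalso
      omega

end SC5

noncomputable def scEquiv (n : ℕ) :
    {l : List ℕ | IsPartition l ∧ SeqCongruent l ∧ l.getD 0 0 = n} ≃ Nat.Partition n where
  toFun := fun x => ⟨SC5.fm x.1, fun hi => (SC5.fm_mem hi).1,
    by rw [SC5.fm_sum x.2.1.1 x.2.2.1]; exact x.2.2.2⟩
  invFun := fun μ => ⟨SC5.gl μ.parts, by
    obtain ⟨h1, h2, h3⟩ := SC5.gl_mem μ.parts (fun x hx => μ.parts_pos hx)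
    exact ⟨h1, h2, by rw [h3, μ.parts_sum]⟩⟩
  left_inv := fun x => Subtype.ext (SC5.glfm x.2.1.1 x.2.1.2 x.2.2.1)
  right_inv := fun μ => Nat.Partition.ext (SC5.fmgl μ.parts (fun x hx => μ.parts_pos hx))

theorem stmt5 (n : ℕ) :
    {l : List ℕ | IsPartition l ∧ SeqCongruent l ∧ l.getD 0 0 = n}.ncard
      = Fintype.card (Nat.Partition n) := by
  rw [← Nat.card_coe_set_eq, ← Nat.card_eq_fintype_card]
  exact Nat.card_congr (scEquiv n)
end

section
/- The map σ sending a sequentially congruent partition φ with largest part n to the partition with frequencies m_i = (φ_i − φ_{i+1})/i (where φ_{i+1} = 0 beyond the length of φ) produces a partition of n; that is, Σ_i i·(φ_i − φ_{i+1})/i summed appropriately, namely Σ_i (φ_i − φ_{i+1}) weighted as sizes, yields |σ(φ)| = Σ_i i · m_i = φ₁ = n. -/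
lemma telesum (f : ℕ → ℕ) (hm : ∀ j, f (j+1) ≤ f j) :
    ∀ n, (∀ j < n, (j+1) ∣ f j - f (j+1)) →
    ((List.range n).map (fun j => ((f j - f (j+1))/(j+1)) * (j+1))).sum = f 0 - f n := by
  have hm0 : ∀ n, f n ≤ f 0 := by
    intro n; induction n with
    | zero => exact le_rfl
    | succ k ih => exact le_trans (hm k) ih
  intro n
  induction n with
  | zero => simp
  | succ n ih =>
    intro hd
    rw [List.range_succ, List.map_append, List.sum_append,
      ih (fun j hj => hd j (Nat.lt_succ_of_lt hj))]
    simp only [List.map_cons, List.map_nil, List.sum_cons, List.sum_nil, add_zero]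
    rw [Nat.div_mul_cancel (hd n (Nat.lt_succ_self n))]
    have h1 := hm n
    have h2 := hm0 n
    omega

theorem stmt7 (l : List ℕ) (hl : IsPartition l) (hsc : SeqCongruent l) :
    IsPartition (sigmaMap l) ∧ (sigmaMap l).sum = l.getD 0 0 := by
  have hmono : ∀ j, l.getD (j+1) 0 ≤ l.getD j 0 := by
    intro j
    by_cases h : j + 1 < l.length
    · rw [List.getD_eq_getElem _ _ h, List.getD_eq_getElem _ _ (Nat.lt_of_succ_lt h)]
      exact List.pairwise_iff_getElem.mp hl.1 j (j+1) (Nat.lt_of_succ_lt h) h (Nat.lt_succ_self j)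
    · rw [List.getD_eq_default _ _ (le_of_not_gt h)]
      exact Nat.zero_le _
  have hdvd : ∀ j < l.length, (j+1) ∣ l.getD j 0 - l.getD (j+1) 0 :=
    fun j hj => (Nat.modEq_iff_dvd' (hmono j)).mp (hsc j hj).symm
  refine ⟨⟨?_, ?_⟩, ?_⟩
  · rw [sigmaMap]
    refine List.pairwise_flatMap.mpr ⟨fun a _ => ?_, ?_⟩
    · exact List.pairwise_replicate.mpr (Or.inr le_rfl)
    · rw [List.pairwise_reverse]
      refine (List.pairwise_lt_range (n := _)).imp ?_
      intro a b hab x hx y hy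
      rw [List.eq_of_mem_replicate hx, List.eq_of_mem_replicate hy]
      omega
  · intro x hx
    rw [sigmaMap, List.mem_flatMap] at hx
    obtain ⟨j, _, hx⟩ := hx
    rw [List.eq_of_mem_replicate hx]
    exact Nat.succ_pos j
  · rw [sigmaMap, List.flatMap_def, List.sum_flatten, List.map_map, List.map_reverse,
      List.sum_reverse]
    have : ((List.range l.length).map
        (List.sum ∘ fun j => List.replicate ((l.getD j 0 - l.getD (j+1) 0) / (j+1)) (j+1))).sum
        = ((List.range l.length).map
          (fun j => ((l.getD j 0 - l.getD (j+1) 0) / (j+1)) * (j+1))).sum := by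
      congr 1
      apply List.map_congr_left
      intro j _
      simp [List.sum_replicate, smul_eq_mul]
    rw [this, telesum _ hmono _ hdvd, List.getD_eq_default _ _ le_rfl, Nat.sub_zero]
end

section
/- For every sequentially congruent partition φ, (π∘σ)²(φ) = φ, where π(λ)_i = i·λ_i + Σ_{j>i} λ_j and σ(φ) is the partition in which i occurs with frequency (φ_i − φ_{i+1})/i. -/
/- ## generic flatMap-of-replicates -/

def FM (r : ℕ) (c : ℕ → ℕ) : List ℕ :=
  ((List.range r).reverse).flatMap (fun j => List.replicate (c j) (j+1))

lemma FM_succ (r : ℕ) (c : ℕ → ℕ) :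
    FM (r+1) c = List.replicate (c r) (r+1) ++ FM r c := by
  simp [FM, List.range_succ]

lemma mem_FM {r : ℕ} {c : ℕ → ℕ} {x : ℕ} (hx : x ∈ FM r c) : ∃ j < r, x = j + 1 := by
  simp only [FM, List.mem_flatMap, List.mem_reverse, List.mem_range,
    List.mem_replicate] at hx
  obtain ⟨j, hj, _, rfl⟩ := hx
  exact ⟨j, hj, rfl⟩

lemma sorted_FM (r : ℕ) (c : ℕ → ℕ) : (FM r c).Pairwise (· ≥ ·) := by
  induction r with
  | zero => simp [FM]
  | succ r ih =>
    rw [FM_succ]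
    rw [List.pairwise_append]
    refine ⟨List.pairwise_replicate.2 (Or.inr le_rfl), ih, ?_⟩
    intro a ha b hb
    obtain rfl : a = r + 1 := List.eq_of_mem_replicate ha
    obtain ⟨j, hj, rfl⟩ := mem_FM hb
    omega

lemma filter_sum_FM (r : ℕ) (c : ℕ → ℕ) (m : ℕ) :
    ((FM r c).filter (fun x => decide (m + 1 ≤ x))).sum
      = ((List.range r).map (fun k => if m ≤ k then (k+1) * c k else 0)).sum := by
  induction r with
  | zero => simp [FM]
  | succ r ih =>
    rw [FM_succ, List.filter_append, List.sum_append, ih, List.range_succ,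
      List.map_append, List.sum_append, List.filter_replicate]
    simp only [List.map_cons, List.map_nil, List.sum_cons, List.sum_nil]
    by_cases h : m ≤ r
    · rw [if_pos (by simpa using h), if_pos (by omega)]
      simp [List.sum_replicate, Nat.add_comm, Nat.mul_comm]
    · rw [if_neg (by simpa using h), if_neg (by omega)]
      simp

lemma getD_zero_FM (r : ℕ) (c : ℕ → ℕ) (hc : 0 < c r) :
    (FM (r+1) c).getD 0 0 = r + 1 := by
  rw [FM_succ]
  obtain ⟨q, hq⟩ : ∃ q, c r = q + 1 := ⟨c r - 1, by omega⟩
  rw [hq]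
  simp [List.replicate_succ]

/- ## basic partition facts -/

lemma getD_mono {l : List ℕ} (hl : l.Pairwise (· ≥ ·)) (j : ℕ) :
    l.getD (j+1) 0 ≤ l.getD j 0 := by
  by_cases h : j + 1 < l.length
  · rw [List.getD_eq_getElem _ _ h, List.getD_eq_getElem _ _ (by omega)]
    exact List.pairwise_iff_getElem.1 hl j (j+1) _ h (by omega)
  · rw [List.getD_eq_default _ _ (by omega)]
    exact Nat.zero_le _

lemma le_getD_zero {l : List ℕ} (hl : l.Pairwise (· ≥ ·)) {x : ℕ} (hx : x ∈ l) :
    x ≤ l.getD 0 0 := by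
  obtain ⟨i, hi, rfl⟩ := List.mem_iff_getElem.1 hx
  rw [List.getD_eq_getElem _ _ (by omega : 0 < l.length)]
  rcases Nat.eq_zero_or_pos i with rfl | hpos
  · exact le_rfl
  · exact List.pairwise_iff_getElem.1 hl 0 i _ hi hpos

/- ## Dmap and lemma S -/

def Dmap (l : List ℕ) : List ℕ :=
  ((List.range l.length).reverse).flatMap
    (fun j => List.replicate (l.getD j 0 - l.getD (j+1) 0) (j+1))

lemma length_piMap (l : List ℕ) : (piMap l).length = l.length := by
  simp [piMap]

lemma getD_piMap (l : List ℕ) {j : ℕ} (hj : j < l.length) :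
    (piMap l).getD j 0 = (j+1) * l.getD j 0 + (l.drop (j+1)).sum := by
  rw [List.getD_eq_getElem _ _ (by simpa [length_piMap] using hj)]
  simp [piMap]

lemma getD_piMap_default (l : List ℕ) {j : ℕ} (hj : l.length ≤ j) :
    (piMap l).getD j 0 = 0 :=
  List.getD_eq_default _ _ (by simpa [length_piMap] using hj)

lemma sigma_piMap (l : List ℕ) (hl : l.Pairwise (· ≥ ·)) :
    sigmaMap (piMap l) = Dmap l := by
  unfold sigmaMap Dmap
  rw [length_piMap]
  show (((List.range l.length).reverse).map _).flatten = (((List.range l.length).reverse).map _).flatten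
  congr 1
  apply List.map_congr_left
  intro j hjm
  rw [List.mem_reverse, List.mem_range] at hjm
  congr 1
  by_cases hj1 : j + 1 < l.length
  · rw [getD_piMap l hjm, getD_piMap l hj1]
    have hdrop : l.drop (j+1) = l.getD (j+1) 0 :: l.drop (j+2) := by
      rw [List.getD_eq_getElem _ _ hj1]
      exact List.drop_eq_getElem_cons hj1
    rw [hdrop, List.sum_cons]
    have hab : l.getD (j+1) 0 ≤ l.getD j 0 := getD_mono hl j
    set a := l.getD j 0
    set b := l.getD (j+1) 0
    set s := (l.drop (j+2)).sum
    have h1 : (j+2)*b = (j+1)*b + b := by ring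
    have h2 : (j+1)*(a-b) = (j+1)*a - (j+1)*b := Nat.mul_sub _ _ _
    have h3 : (j+1)*b ≤ (j+1)*a := Nat.mul_le_mul_left _ hab
    have key : (j+1)*a + (b + s) - ((j+2)*b + s) = (j+1)*(a-b) := by omega
    rw [key, Nat.mul_div_cancel_left _ (by omega)]
  · have hlen : j + 1 = l.length := by omega
    have hd : l.getD (j+1) 0 = 0 := List.getD_eq_default _ _ (by omega)
    rw [getD_piMap l hjm, getD_piMap_default l (by omega), hd,
      List.drop_eq_nil_of_le (by omega)]
    simp only [List.sum_nil, Nat.add_zero, Nat.sub_zero]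
    exact Nat.mul_div_cancel_left _ (Nat.succ_pos j)


/- ## Dmap = conj -/

lemma flatMap_congr {α β : Type*} {L : List α} {f g : α → List β}
    (h : ∀ a ∈ L, f a = g a) : L.flatMap f = L.flatMap g := by
  rw [show L.flatMap f = (L.map f).flatten from rfl,
    show L.flatMap g = (L.map g).flatten from rfl, List.map_congr_left h]

lemma Dmap_cons (a : ℕ) (t : List ℕ) :
    Dmap (a :: t) = (Dmap t).map (· + 1) ++ List.replicate (a - t.getD 0 0) 1 := by
  unfold Dmap
  rw [List.length_cons, List.range_succ_eq_map, List.reverse_cons, List.flatMap_append,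
    ← List.map_reverse, List.flatMap_map, List.map_flatMap]
  congr 1
  · apply flatMap_congr
    intro k hk
    simp [List.getD_cons_succ, List.map_replicate, Nat.succ_eq_add_one]
  · simp

lemma conj_cons (a : ℕ) (t : List ℕ) (hat : t.getD 0 0 ≤ a)
    (hmem : ∀ x ∈ t, x ≤ t.getD 0 0) :
    conj (a :: t) = (conj t).map (· + 1) ++ List.replicate (a - t.getD 0 0) 1 := by
  unfold conj
  rw [List.getD_cons_zero]
  set b := t.getD 0 0 with hb
  have hsplit : List.range a = List.range b ++ List.range' b (a - b) := by
    rw [List.range_eq_range', List.range_eq_range',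
      show a = b + (a - b) by omega, ← List.range'_append (s := 0) (m := b) (n := a-b) (step := 1)]
    simp
  rw [hsplit, List.map_append]
  congr 1
  · rw [List.map_map]
    apply List.map_congr_left
    intro i hi
    rw [List.mem_range] at hi
    simp only [Function.comp_apply, List.countP_cons]
    have : decide (i + 1 ≤ a) = true := by simp; omega
    rw [this]
    simp
  · have hone : ∀ i ∈ List.range' b (a - b),
        (a :: t).countP (fun x => decide (i + 1 ≤ x)) = 1 := by
      intro i hi
      rw [List.mem_range'_1] at hi
      have h2 : t.countP (fun x => decide (i + 1 ≤ x)) = 0 := by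
        rw [List.countP_eq_zero]
        intro x hx
        have := hmem x hx
        simp; omega
      rw [List.countP_cons, h2]
      have hd : decide (i + 1 ≤ a) = true := by simp; omega
      rw [hd]
      simp
    have := List.eq_replicate_of_mem (fun y hy => by
      obtain ⟨i, hi, rfl⟩ := List.mem_map.1 hy
      exact hone i hi)
    rw [this]
    simp

lemma Dmap_eq_conj (l : List ℕ) (hl : IsPartition l) : Dmap l = conj l := by
  induction l with
  | nil => simp [Dmap, conj]
  | cons a t ih =>
    have hts : t.Pairwise (· ≥ ·) := hl.1.of_cons
    have ht : IsPartition t := ⟨hts, fun x hx => hl.2 x (List.mem_cons_of_mem _ hx)⟩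
    have hrel : ∀ x ∈ t, x ≤ a := fun _ hx => List.rel_of_pairwise_cons hl.1 hx
    have hat : t.getD 0 0 ≤ a := by
      cases t with
      | nil => simp
      | cons b s => exact hrel b List.mem_cons_self
    rw [Dmap_cons, conj_cons a t hat (fun x hx => le_getD_zero hts hx), ih ht]

/- ## sum lemmas for piMap ∘ conj -/

lemma countP_range' (s n a : ℕ) :
    (List.range' s n).countP (fun i => decide (i + 1 ≤ a)) = min a (s + n) - s := by
  induction n generalizing s with
  | zero => simp
  | succ n ih =>
    rw [List.range'_succ, List.countP_cons, ih (s + 1)]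
    by_cases h : s + 1 ≤ a <;> simp [h] <;> omega

lemma sum_ite_count (L : List ℕ) (p : ℕ → Bool) :
    (L.map (fun i => if p i then 1 else 0)).sum = L.countP p := by
  induction L with
  | nil => simp
  | cons a t ih => rw [List.map_cons, List.sum_cons, List.countP_cons, ih]; omega

lemma sum_counts (l : List ℕ) (s n : ℕ) :
    ((List.range' s n).map (fun i => l.countP (fun x => decide (i + 1 ≤ x)))).sum
      = (l.map (fun x => min x (s + n) - s)).sum := by
  induction l with
  | nil => simp
  | cons a t ih =>
    simp only [List.countP_cons, List.map_cons, List.sum_cons]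
    have expand : ((List.range' s n).map
        (fun i => t.countP (fun x => decide (i + 1 ≤ x)) + if decide (i+1 ≤ a) then 1 else 0)).sum
        = ((List.range' s n).map (fun i => t.countP (fun x => decide (i + 1 ≤ x)))).sum
          + ((List.range' s n).map (fun i => if decide (i+1 ≤ a) then 1 else 0)).sum := by
      induction (List.range' s n) with
      | nil => simp
      | cons b L ihL => simp only [List.map_cons, List.sum_cons, ihL]; omega
    rw [expand, ih, sum_ite_count, countP_range']
    omega

lemma split_count (l : List ℕ) (m : ℕ) :
    m * l.countP (fun x => decide (m ≤ x)) + (l.map (fun x => x - m)).sum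
      = (l.filter (fun x => decide (m ≤ x))).sum := by
  induction l with
  | nil => simp
  | cons a t ih =>
    simp only [List.countP_cons, List.map_cons, List.sum_cons, List.filter_cons]
    by_cases h : m ≤ a
    · simp [h, Nat.mul_succ]
      omega
    · simp [h]
      omega

lemma piMap_conj (l : List ℕ) (hl : IsPartition l) :
    piMap (conj l) = (List.range (l.getD 0 0)).map
      (fun j => (l.filter (fun x => decide (j + 1 ≤ x))).sum) := by
  unfold piMap
  have hlen : (conj l).length = l.getD 0 0 := by simp [conj]
  rw [hlen]
  apply List.map_congr_left
  intro j hj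
  rw [List.mem_range] at hj
  have hgd : (conj l).getD j 0 = l.countP (fun x => decide (j + 1 ≤ x)) := by
    rw [List.getD_eq_getElem _ _ (by rw [hlen]; omega)]
    simp [conj]
  have hdrop : (conj l).drop (j + 1)
      = (List.range' (j+1) (l.getD 0 0 - (j+1))).map
          (fun i => l.countP (fun x => decide (i + 1 ≤ x))) := by
    unfold conj
    have hsplit : List.range (l.getD 0 0)
        = List.range (j+1) ++ List.range' (j+1) (l.getD 0 0 - (j+1)) := by
      rw [List.range_eq_range', List.range_eq_range',
        show l.getD 0 0 = (j+1) + (l.getD 0 0 - (j+1)) by omega,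
        ← List.range'_append (s := 0) (m := j+1) (n := l.getD 0 0 - (j+1)) (step := 1)]
      simp
    rw [hsplit, List.map_append]
    have hlen1 : (List.map (fun i => l.countP (fun x => decide (i + 1 ≤ x)))
        (List.range (j+1))).length = j + 1 := by simp
    have hd := List.drop_left
      (l₁ := List.map (fun i => l.countP (fun x => decide (i + 1 ≤ x))) (List.range (j+1)))
      (l₂ := List.map (fun i => l.countP (fun x => decide (i + 1 ≤ x)))
        (List.range' (j+1) (l.getD 0 0 - (j+1))))
    rw [hlen1] at hd
    exact hd
  rw [hgd, hdrop, sum_counts]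
  have hmin : (l.map (fun x => min x ((j+1) + (l.getD 0 0 - (j+1))) - (j+1))).sum
      = (l.map (fun x => x - (j+1))).sum := by
    congr 1
    apply List.map_congr_left
    intro x hx
    have hx0 : x ≤ l.getD 0 0 := le_getD_zero hl.1 hx
    have : min x ((j+1) + (l.getD 0 0 - (j+1))) = x := by omega
    rw [this]
  rw [hmin]
  exact split_count l (j+1)

/- ## telescoping -/

lemma tele (l : List ℕ) (hl : l.Pairwise (· ≥ ·)) (j : ℕ) :
    ((List.range l.length).map
      (fun k => if j ≤ k then l.getD k 0 - l.getD (k+1) 0 else 0)).sum = l.getD j 0 := by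
  induction l generalizing j with
  | nil => simp [List.getD]
  | cons a t ih =>
    rw [List.length_cons, List.range_succ_eq_map, List.map_cons, List.sum_cons, List.map_map]
    have step : ((List.range t.length).map
        ((fun k => if j ≤ k then (a::t).getD k 0 - (a::t).getD (k+1) 0 else 0) ∘ Nat.succ)).sum
        = ((List.range t.length).map
            (fun k => if j - 1 ≤ k then t.getD k 0 - t.getD (k+1) 0 else 0)).sum := by
      congr 1
      apply List.map_congr_left
      intro k hk
      simp only [Function.comp_apply, Nat.succ_eq_add_one, List.getD_cons_succ]
      rw [if_congr (by omega : (j ≤ k + 1) ↔ (j - 1 ≤ k)) rfl rfl]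
    rw [step, ih hl.of_cons (j-1)]
    have hrel : ∀ x ∈ t, x ≤ a := fun _ hx => List.rel_of_pairwise_cons hl hx
    have hat : t.getD 0 0 ≤ a := by
      cases t with
      | nil => simp
      | cons b s => exact hrel b List.mem_cons_self
    cases j with
    | zero =>
      simp only [Nat.le_refl, if_pos, List.getD_cons_zero, List.getD_cons_succ, Nat.zero_sub]
      omega
    | succ j' =>
      simp only [List.getD_cons_succ, Nat.add_sub_cancel]
      rw [if_neg (by omega)]
      omega

/- ## properties of μ = sigmaMap l -/

lemma sigmaMap_eq_FM (l : List ℕ) :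
    sigmaMap l = FM l.length (fun j => (l.getD j 0 - l.getD (j+1) 0) / (j+1)) := rfl

lemma sigmaMap_partition (l : List ℕ) : IsPartition (sigmaMap l) := by
  rw [sigmaMap_eq_FM]
  refine ⟨sorted_FM _ _, fun x hx => ?_⟩
  obtain ⟨k, hk, rfl⟩ := mem_FM hx
  omega

lemma sc_diff (l : List ℕ) (hl : l.Pairwise (· ≥ ·)) (hsc : SeqCongruent l)
    {k : ℕ} (hk : k < l.length) :
    (k+1) * ((l.getD k 0 - l.getD (k+1) 0) / (k+1)) = l.getD k 0 - l.getD (k+1) 0 :=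
  Nat.mul_div_cancel' ((Nat.modEq_iff_dvd' (getD_mono hl k)).1 (hsc k hk).symm)

lemma sigmaMap_getD_zero (l : List ℕ) (hl : IsPartition l) (hsc : SeqCongruent l) :
    (sigmaMap l).getD 0 0 = l.length := by
  rcases h : l.length with _ | s
  · rw [List.length_eq_zero_iff] at h
    subst h; rfl
  · rw [sigmaMap_eq_FM, h]
    apply getD_zero_FM
    have hs : s < l.length := by omega
    have hgd : l.getD (s+1) 0 = 0 := List.getD_eq_default _ _ (by omega)
    have hmem : l.getD s 0 ∈ l := by
      rw [List.getD_eq_getElem _ _ hs]; exact List.getElem_mem _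
    have hpos : 0 < l.getD s 0 := hl.2 _ hmem
    have hdvd : (s+1) ∣ l.getD s 0 := by
      have := (Nat.modEq_iff_dvd' (getD_mono hl.1 s)).1 (hsc s hs).symm
      rwa [hgd, Nat.sub_zero] at this
    have : s + 1 ≤ l.getD s 0 := Nat.le_of_dvd hpos hdvd
    rw [hgd]
    exact Nat.div_pos (by omega) (by omega)

lemma sigmaMap_filter_sum (l : List ℕ) (hl : IsPartition l) (hsc : SeqCongruent l) (j : ℕ) :
    ((sigmaMap l).filter (fun x => decide (j + 1 ≤ x))).sum = l.getD j 0 := by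
  rw [sigmaMap_eq_FM, filter_sum_FM]
  have : ((List.range l.length).map
      (fun k => if j ≤ k then (k+1) * ((l.getD k 0 - l.getD (k+1) 0) / (k+1)) else 0)).sum
      = ((List.range l.length).map
          (fun k => if j ≤ k then l.getD k 0 - l.getD (k+1) 0 else 0)).sum := by
    congr 1
    apply List.map_congr_left
    intro k hk
    rw [List.mem_range] at hk
    rw [sc_diff l hl.1 hsc hk]
  rw [this]
  exact tele l hl.1 j

lemma map_getD_range (l : List ℕ) :
    (List.range l.length).map (fun j => l.getD j 0) = l := by
  apply List.ext_getElem (by simp)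
  intro n h1 h2
  rw [List.getElem_map, List.getElem_range]
  exact List.getD_eq_getElem _ _ h2

theorem stmt10 (l : List ℕ) (hl : IsPartition l) (hsc : SeqCongruent l) :
    piMap (sigmaMap (piMap (sigmaMap l))) = l := by
  have hμ : IsPartition (sigmaMap l) := sigmaMap_partition l
  rw [sigma_piMap _ hμ.1, Dmap_eq_conj _ hμ, piMap_conj _ hμ,
    sigmaMap_getD_zero l hl hsc]
  have : ((List.range l.length).map
      (fun j => ((sigmaMap l).filter (fun x => decide (j + 1 ≤ x))).sum))
      = (List.range l.length).map (fun j => l.getD j 0) := by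
    apply List.map_congr_left
    intro j hj
    exact sigmaMap_filter_sum l hl hsc j
  rw [this, map_getD_range]
end

section
/- The number of frequency congruent partitions of length n (partitions in which each part i occurs a multiple of i times, with n total parts) equals p(n), the number of partitions of n. -/
def gmul (s : Multiset ℕ) : Multiset ℕ := s.bind (fun i => Multiset.replicate i i)

lemma count_gmul (s : Multiset ℕ) (i : ℕ) : (gmul s).count i = i * s.count i := by
  induction s using Multiset.induction with
  | empty => simp [gmul]
  | cons a s ih =>
    simp only [gmul, Multiset.cons_bind] at *
    rw [Multiset.count_add, ih, Multiset.count_cons, Multiset.count_replicate]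
    by_cases h : a = i
    · subst h; simp [Nat.mul_add]; ring
    · simp [h, Ne.symm h]

lemma card_gmul (s : Multiset ℕ) : Multiset.card (gmul s) = s.sum := by
  induction s using Multiset.induction with
  | empty => simp [gmul]
  | cons a s ih => simp [gmul, Multiset.cons_bind, ih]

def fmap (n : ℕ) (p : n.Partition) : List ℕ := Multiset.sort (gmul p.parts) (· ≥ ·)

lemma fmap_coe (n : ℕ) (p : n.Partition) : (↑(fmap n p) : Multiset ℕ) = gmul p.parts :=
  Multiset.sort_eq _ _

lemma fmap_count (n : ℕ) (p : n.Partition) (i : ℕ) :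
    (fmap n p).count i = i * p.parts.count i := by
  rw [← Multiset.coe_count, fmap_coe, count_gmul]

lemma fmap_mem (n : ℕ) (p : n.Partition) :
    fmap n p ∈ {l : List ℕ | IsPartition l ∧ FreqCongruent l ∧ l.length = n} := by
  refine ⟨⟨Multiset.pairwise_sort _ _, ?_⟩, fun i _ => ⟨p.parts.count i, fmap_count n p i⟩, ?_⟩
  · intro x hx
    have : x ∈ gmul p.parts := by rw [← fmap_coe n p]; exact_mod_cast hx
    obtain ⟨a, ha, hx⟩ := Multiset.mem_bind.1 this
    have := Multiset.eq_of_mem_replicate hx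
    subst this
    exact p.parts_pos ha
  · have : (fmap n p).length = Multiset.card (gmul p.parts) := by
      rw [← fmap_coe n p]; simp
    rw [this, card_gmul, p.parts_sum]

lemma fmap_inj (n : ℕ) : Function.Injective (fmap n) := by
  intro p q h
  have hm : gmul p.parts = gmul q.parts := by rw [← fmap_coe n p, ← fmap_coe n q, h]
  ext1
  ext i
  rcases Nat.eq_zero_or_pos i with hi | hi
  · subst hi
    rw [Multiset.count_eq_zero_of_notMem, Multiset.count_eq_zero_of_notMem]
    · exact fun hc => lt_irrefl 0 (q.parts_pos hc)
    · exact fun hc => lt_irrefl 0 (p.parts_pos hc)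
  · have := congrArg (Multiset.count i) hm
    rw [count_gmul, count_gmul] at this
    exact Nat.eq_of_mul_eq_mul_left hi this

lemma fmap_surj (n : ℕ) (l : List ℕ)
    (hl : l ∈ {l : List ℕ | IsPartition l ∧ FreqCongruent l ∧ l.length = n}) :
    ∃ p, fmap n p = l := by
  obtain ⟨⟨hsort, hpos⟩, hfc, hlen⟩ := hl
  set m : Multiset ℕ := l.toFinset.val.bind (fun i => Multiset.replicate (l.count i / i) i)
    with hm
  have hcount : ∀ i, m.count i = if i ∈ l then l.count i / i else 0 := by
    intro i
    rw [hm, Multiset.count_bind]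
    have : (Multiset.map (fun b => Multiset.count i (Multiset.replicate (l.count b / b) b))
        l.toFinset.val).sum
        = ∑ b ∈ l.toFinset, Multiset.count i (Multiset.replicate (l.count b / b) b) := rfl
    rw [this]
    simp only [Multiset.count_replicate]
    rw [Finset.sum_ite_eq' l.toFinset i (fun b => l.count b / b)]
    simp [List.mem_toFinset]
  have hg : gmul m = (↑l : Multiset ℕ) := by
    ext i
    rw [count_gmul, Multiset.coe_count, hcount]
    by_cases h : i ∈ l
    · simp only [h, if_true]
      rcases Nat.eq_zero_or_pos i with rfl | hi
      · have := hpos 0 h; omega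
      · exact Nat.mul_div_cancel' (hfc i hi)
    · simp [h, List.count_eq_zero_of_not_mem h]
  refine ⟨⟨m, ?_, ?_⟩, ?_⟩
  · intro i hi
    obtain ⟨a, ha, hrep⟩ := Multiset.mem_bind.1 hi
    have := Multiset.eq_of_mem_replicate hrep
    subst this
    exact hpos i (List.mem_toFinset.1 ha)
  · have hc := card_gmul m
    rw [hg] at hc
    simpa [hlen] using hc.symm
  · show Multiset.sort (gmul m) (· ≥ ·) = l
    rw [hg]
    exact List.Perm.eq_of_pairwise' (Multiset.pairwise_sort _ _) hsort
      (Multiset.coe_eq_coe.1 (Multiset.sort_eq _ _))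

theorem stmt12 (n : ℕ) :
    {l : List ℕ | IsPartition l ∧ FreqCongruent l ∧ l.length = n}.ncard
      = Fintype.card (Nat.Partition n) := by
  have : {l : List ℕ | IsPartition l ∧ FreqCongruent l ∧ l.length = n} = Set.range (fmap n) := by
    ext l
    constructor
    · intro hl; obtain ⟨p, hp⟩ := fmap_surj n l hl; exact ⟨p, hp⟩
    · rintro ⟨p, rfl⟩; exact fmap_mem n p
  rw [this, ← Set.image_univ, Set.ncard_image_of_injective _ (fmap_inj n), Set.ncard_univ,
    Nat.card_eq_fintype_card]
end

section
/- The map sending a partition λ = (1^{m₁} 2^{m₂} 3^{m₃} ...) of n to the partition (1^{1·m₁} 2^{2·m₂} 3^{3·m₃} ...) is a bijection from partitions of n onto frequency congruent partitions of length n. -/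
/-- The map sending `(1^{m₁} 2^{m₂} ...)` to `(1^{1·m₁} 2^{2·m₂} ...)`: each occurrence of a
part `i` is replaced by `i` copies of `i`, so the multiplicity of `i` is multiplied by `i`. -/
def stretch (l : List ℕ) : List ℕ :=
  l.flatMap (fun i => List.replicate i i)

namespace Stmt13Aux

lemma mem_stretch {x : ℕ} {l : List ℕ} (h : x ∈ stretch l) : x ∈ l := by
  simp only [stretch, List.mem_flatMap] at h
  obtain ⟨i, hi, hx⟩ := h
  rw [List.eq_of_mem_replicate hx]; exact hi

lemma count_stretch (l : List ℕ) (i : ℕ) : (stretch l).count i = i * l.count i := by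
  induction l with
  | nil => simp [stretch]
  | cons a t ih =>
    simp only [stretch, List.flatMap_cons, List.count_append, List.count_cons] at *
    rw [ih, List.count_replicate]
    rcases eq_or_ne a i with rfl | h
    · simp; ring
    · simp [h, Ne.symm h]

lemma length_stretch (l : List ℕ) : (stretch l).length = l.sum := by
  induction l with
  | nil => simp [stretch]
  | cons a t ih => simp only [stretch, List.flatMap_cons, List.length_append,
      List.length_replicate, List.sum_cons] at *; omega

lemma sorted_stretch {l : List ℕ} (h : l.Pairwise (· ≥ ·)) : (stretch l).Pairwise (· ≥ ·) := by
  induction l with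
  | nil => simp [stretch]
  | cons a t ih =>
    rw [List.pairwise_cons] at h
    simp only [stretch, List.flatMap_cons]
    rw [List.pairwise_append]
    refine ⟨List.pairwise_replicate.2 (Or.inr le_rfl), ih h.2, ?_⟩
    intro x hx y hy
    rw [List.eq_of_mem_replicate hx]
    exact h.1 y (mem_stretch hy)

def rebuild (c : ℕ → ℕ) (k : ℕ) : List ℕ :=
  (List.range k).reverse.flatMap (fun i => List.replicate (c (i+1)) (i+1))

lemma rebuild_succ (c : ℕ → ℕ) (k : ℕ) :
    rebuild c (k+1) = List.replicate (c (k+1)) (k+1) ++ rebuild c k := by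
  simp [rebuild, List.range_succ]

lemma mem_rebuild {x : ℕ} {c : ℕ → ℕ} {k : ℕ} (h : x ∈ rebuild c k) : 0 < x ∧ x ≤ k := by
  simp only [rebuild, List.mem_flatMap, List.mem_reverse, List.mem_range] at h
  obtain ⟨i, hi, hx⟩ := h
  rw [List.eq_of_mem_replicate hx]
  omega

lemma sorted_rebuild (c : ℕ → ℕ) (k : ℕ) : (rebuild c k).Pairwise (· ≥ ·) := by
  induction k with
  | zero => simp [rebuild]
  | succ k ih =>
    rw [rebuild_succ, List.pairwise_append]
    refine ⟨List.pairwise_replicate.2 (Or.inr le_rfl), ih, ?_⟩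
    intro x hx y hy
    rw [List.eq_of_mem_replicate hx]
    have := mem_rebuild hy
    omega

lemma count_rebuild (c : ℕ → ℕ) (k j : ℕ) :
    (rebuild c k).count j = if 1 ≤ j ∧ j ≤ k then c j else 0 := by
  induction k with
  | zero => simp [rebuild]; intros; omega
  | succ k ih =>
    rw [rebuild_succ, List.count_append, ih, List.count_replicate]
    simp only [beq_iff_eq]
    by_cases h : k + 1 = j
    · subst h
      rw [if_pos rfl, if_neg (by omega : ¬(1 ≤ k+1 ∧ k+1 ≤ k)),
        if_pos (by omega : 1 ≤ k+1 ∧ k+1 ≤ k+1)]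
      omega
    · rw [if_neg h]
      by_cases h1 : 1 ≤ j ∧ j ≤ k
      · rw [if_pos h1, if_pos (by omega)]; omega
      · rw [if_neg h1, if_neg (by omega)]

lemma le_headD {l : List ℕ} (hs : l.Pairwise (· ≥ ·)) {x : ℕ} (hx : x ∈ l) : x ≤ l.headD 0 := by
  cases l with
  | nil => simp at hx
  | cons a t =>
    rw [List.pairwise_cons] at hs
    rcases List.mem_cons.1 hx with rfl | h
    · simp
    · exact hs.1 x h

end Stmt13Aux

open Stmt13Aux in
theorem stmt13 (n : ℕ) :
    Set.BijOn stretch {l : List ℕ | IsPartition l ∧ l.sum = n}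
      {l : List ℕ | IsPartition l ∧ FreqCongruent l ∧ l.length = n} := by
  refine ⟨?_, ?_, ?_⟩
  · -- MapsTo
    rintro l ⟨⟨hs, hp⟩, hsum⟩
    refine ⟨⟨sorted_stretch hs, fun x hx => hp x (mem_stretch hx)⟩,
      fun i _ => ⟨l.count i, count_stretch l i⟩, ?_⟩
    rw [length_stretch, hsum]
  · -- InjOn
    rintro a ⟨⟨hsa, hpa⟩, -⟩ b ⟨⟨hsb, hpb⟩, -⟩ h
    refine List.Perm.eq_of_pairwise' hsa hsb (List.perm_iff_count.2 fun x => ?_)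
    rcases Nat.eq_zero_or_pos x with rfl | hx
    · rw [List.count_eq_zero.2 (fun hm0 => absurd (hpa 0 hm0) (lt_irrefl 0)),
          List.count_eq_zero.2 (fun hm0 => absurd (hpb 0 hm0) (lt_irrefl 0))]
    · have := congrArg (List.count x) h
      rw [count_stretch, count_stretch] at this
      exact Nat.eq_of_mul_eq_mul_left hx this
  · -- SurjOn
    rintro l ⟨⟨hs, hp⟩, hf, hlen⟩
    set m := rebuild (fun i => l.count i / i) (l.headD 0) with hm
    have hms : m.Pairwise (· ≥ ·) := sorted_rebuild _ _
    have hmp : ∀ x ∈ m, 0 < x := fun x hx => (mem_rebuild hx).1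
    have key : stretch m = l := by
      refine List.Perm.eq_of_pairwise' (sorted_stretch hms) hs
        (List.perm_iff_count.2 fun x => ?_)
      rw [count_stretch]
      rcases Nat.eq_zero_or_pos x with rfl | hx
      · rw [Nat.zero_mul, eq_comm, List.count_eq_zero]
        exact fun hm0 => absurd (hp 0 hm0) (lt_irrefl 0)
      · rw [hm, count_rebuild]
        by_cases hle : 1 ≤ x ∧ x ≤ l.headD 0
        · rw [if_pos hle, Nat.mul_div_cancel' (hf x hx)]
        · rw [if_neg hle, Nat.mul_zero, eq_comm, List.count_eq_zero]
          intro hxl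
          exact hle ⟨hx, le_headD hs hxl⟩
    refine ⟨m, ⟨⟨hms, hmp⟩, ?_⟩, key⟩
    have h1 := length_stretch m
    rw [key, hlen] at h1
    omega
end

section
/- Let A = (a₁, a₂, ...) be a sequence of distinct positive integers and B = {b₁, b₂, ...} ⊆ ℕ a set of positive integers. The map sending a partition with parts from A written (a₁^{n₁} a₂^{n₂} ...) to the partition (b₁^{a₁n₁} b₂^{a₂n₂} ...) is a bijection from partitions of n into parts from A onto partitions of length n with parts from B in which the multiplicity of b_i is divisible by a_i for each i. Consequently #𝒫_B(A, n) = p_A(n). -/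
open Classical in
/-- Replace one occurrence of the part `a i` by `a i` copies of `b i`. -/
noncomputable def relabel (a b : ℕ → ℕ) (x : ℕ) : Multiset ℕ :=
  if h : ∃ i, a i = x then Multiset.replicate (a h.choose) (b h.choose) else 0

/-- The map sending `(a₁^{n₁} a₂^{n₂} ...)` to `(b₁^{a₁n₁} b₂^{a₂n₂} ...)`. -/
noncomputable def relabelMap (a b : ℕ → ℕ) (μ : Multiset ℕ) : Multiset ℕ :=
  μ.bind (relabel a b)

lemma relabel_eq (a b : ℕ → ℕ) (ha : Function.Injective a) (i : ℕ) :
    relabel a b (a i) = Multiset.replicate (a i) (b i) := by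
  rw [relabel]
  split
  next h => rw [ha h.choose_spec]
  next h => exact absurd ⟨i, rfl⟩ h

lemma count_relabel (a b : ℕ → ℕ) (ha : Function.Injective a) (hb : Function.Injective b)
    (x i : ℕ) : (relabel a b x).count (b i) = if x = a i then a i else 0 := by
  by_cases h : ∃ j, a j = x
  · obtain ⟨j, rfl⟩ := h
    rw [relabel_eq a b ha j, Multiset.count_replicate]
    by_cases hji : j = i
    · subst hji; simp
    · rw [if_neg (fun e => hji (hb e)), if_neg (fun e => hji (ha e))]
  · rw [relabel, dif_neg h, Multiset.count_zero, if_neg (fun e => h ⟨i, e.symm⟩)]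

lemma count_relabelMap (a b : ℕ → ℕ) (ha : Function.Injective a) (hb : Function.Injective b)
    (μ : Multiset ℕ) (i : ℕ) :
    (relabelMap a b μ).count (b i) = a i * μ.count (a i) := by
  induction μ using Multiset.induction_on with
  | empty => simp [relabelMap]
  | cons x s ih =>
    rw [relabelMap, Multiset.cons_bind, Multiset.count_add, ← relabelMap, ih,
        count_relabel a b ha hb, Multiset.count_cons]
    split_ifs with h1 h2 h2
    · ring
    · exact absurd h1.symm h2
    · exact absurd h2.symm h1
    · ring

lemma card_relabelMap (a b : ℕ → ℕ) (ha : Function.Injective a)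
    (μ : Multiset ℕ) (hμ : ∀ x ∈ μ, ∃ j, x = a j) :
    Multiset.card (relabelMap a b μ) = μ.sum := by
  revert hμ
  induction μ using Multiset.induction_on with
  | empty => intro; simp [relabelMap]
  | cons x s ih =>
    intro hμ
    obtain ⟨j, rfl⟩ := hμ x (Multiset.mem_cons_self x s)
    rw [relabelMap, Multiset.cons_bind, Multiset.card_add, ← relabelMap,
        ih (fun y hy => hμ y (Multiset.mem_cons_of_mem hy)), relabel_eq a b ha,
        Multiset.card_replicate, Multiset.sum_cons]

lemma mem_relabelMap (a b : ℕ → ℕ) {μ : Multiset ℕ} {x : ℕ}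
    (h : x ∈ relabelMap a b μ) : ∃ i, x = b i := by
  rw [relabelMap, Multiset.mem_bind] at h
  obtain ⟨y, _, hx⟩ := h
  rw [relabel] at hx
  split at hx
  next h' => exact ⟨h'.choose, Multiset.eq_of_mem_replicate hx⟩
  next => simp at hx

open Classical in
noncomputable def invRelabel (a b : ℕ → ℕ) (ν : Multiset ℕ) (x : ℕ) : Multiset ℕ :=
  if h : ∃ i, b i = x then Multiset.replicate (ν.count x / a h.choose) (a h.choose) else 0

lemma invRelabel_eq (a b : ℕ → ℕ) (hb : Function.Injective b) (ν : Multiset ℕ) (i : ℕ) :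
    invRelabel a b ν (b i) = Multiset.replicate (ν.count (b i) / a i) (a i) := by
  rw [invRelabel]
  split
  next h => rw [hb h.choose_spec]
  next h => exact absurd ⟨i, rfl⟩ h


lemma multiset_sum_sum {α : Type*} (s : Finset α) (f : α → Multiset ℕ) :
    (∑ x ∈ s, f x).sum = ∑ x ∈ s, (f x).sum := by
  induction s using Finset.cons_induction with
  | empty => simp
  | cons a t h ih => simp [Finset.sum_cons, ih]

theorem stmt14 (a b : ℕ → ℕ) (ha : Function.Injective a) (hapos : ∀ i, 0 < a i)
    (hb : Function.Injective b) (hbpos : ∀ i, 0 < b i) (n : ℕ) :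
    Set.BijOn (relabelMap a b)
      {μ : Multiset ℕ | (∀ x ∈ μ, ∃ i, x = a i) ∧ μ.sum = n}
      {μ : Multiset ℕ | (∀ x ∈ μ, ∃ i, x = b i) ∧ (∀ i, a i ∣ μ.count (b i)) ∧ μ.card = n} ∧
    {μ : Multiset ℕ | (∀ x ∈ μ, ∃ i, x = b i) ∧ (∀ i, a i ∣ μ.count (b i)) ∧ μ.card = n}.ncard
      = {μ : Multiset ℕ | (∀ x ∈ μ, ∃ i, x = a i) ∧ μ.sum = n}.ncard := by
  have key : Set.BijOn (relabelMap a b)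
      {μ : Multiset ℕ | (∀ x ∈ μ, ∃ i, x = a i) ∧ μ.sum = n}
      {μ : Multiset ℕ | (∀ x ∈ μ, ∃ i, x = b i) ∧ (∀ i, a i ∣ μ.count (b i)) ∧ μ.card = n} := by
    refine ⟨?_, ?_, ?_⟩
    · rintro μ ⟨hμa, hμs⟩
      refine ⟨fun x hx => mem_relabelMap a b hx,
        fun i => ⟨μ.count (a i), count_relabelMap a b ha hb μ i⟩, ?_⟩
      rw [card_relabelMap a b ha μ hμa, hμs]
    · rintro μ ⟨hμa, _⟩ μ' ⟨hμ'a, _⟩ heq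
      rw [Multiset.ext]
      intro x
      by_cases hx : ∃ i, x = a i
      · obtain ⟨i, rfl⟩ := hx
        have h1 := count_relabelMap a b ha hb μ i
        have h2 := count_relabelMap a b ha hb μ' i
        rw [heq, h2] at h1
        exact Nat.eq_of_mul_eq_mul_left (hapos i) h1.symm
      · rw [Multiset.count_eq_zero_of_notMem (fun h => hx (hμa x h)),
            Multiset.count_eq_zero_of_notMem (fun h => hx (hμ'a x h))]
    · rintro ν ⟨hνb, hdvd, hcard⟩
      set μ : Multiset ℕ := ∑ x ∈ ν.toFinset, invRelabel a b ν x with hμdef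
      have hcount : ∀ i, μ.count (a i) = ν.count (b i) / a i := by
        intro i
        have hterm : ∀ x ∈ ν.toFinset, (invRelabel a b ν x).count (a i) =
            if b i = x then ν.count x / a i else 0 := by
          intro x hx
          obtain ⟨j, rfl⟩ := hνb x (Multiset.mem_toFinset.mp hx)
          rw [invRelabel_eq a b hb, Multiset.count_replicate]
          by_cases hij : i = j
          · subst hij; simp
          · rw [if_neg (fun e => hij (ha e).symm), if_neg (fun e => hij (hb e))]
        rw [hμdef, Multiset.count_sum', Finset.sum_congr rfl hterm,
            Finset.sum_ite_eq ν.toFinset (b i) (fun x => ν.count x / a i)]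
        by_cases hmem : b i ∈ ν.toFinset
        · rw [if_pos hmem]
        · rw [if_neg hmem,
              Multiset.count_eq_zero_of_notMem (fun h => hmem (Multiset.mem_toFinset.mpr h)),
              Nat.zero_div]
      have hμa : ∀ x ∈ μ, ∃ i, x = a i := by
        intro x hx
        rw [hμdef, Multiset.mem_sum] at hx
        obtain ⟨y, _, hy⟩ := hx
        rw [invRelabel] at hy
        split at hy
        next h' => exact ⟨h'.choose, Multiset.eq_of_mem_replicate hy⟩
        next => simp at hy
      have hμsum : μ.sum = n := by
        rw [hμdef, multiset_sum_sum]
        calc ∑ x ∈ ν.toFinset, (invRelabel a b ν x).sum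
            = ∑ x ∈ ν.toFinset, ν.count x := Finset.sum_congr rfl (fun x hx => by
              obtain ⟨j, rfl⟩ := hνb x (Multiset.mem_toFinset.mp hx)
              rw [invRelabel_eq a b hb, Multiset.sum_replicate, smul_eq_mul,
                  Nat.div_mul_cancel (hdvd j)])
          _ = Multiset.card ν := Multiset.toFinset_sum_count_eq ν
          _ = n := hcard
      refine ⟨μ, ⟨hμa, hμsum⟩, ?_⟩
      rw [Multiset.ext]
      intro x
      by_cases hx : ∃ i, x = b i
      · obtain ⟨i, rfl⟩ := hx
        rw [count_relabelMap a b ha hb μ i, hcount i, Nat.mul_div_cancel' (hdvd i)]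
      · rw [Multiset.count_eq_zero_of_notMem (fun h => hx (mem_relabelMap a b h)),
            Multiset.count_eq_zero_of_notMem (fun h => hx (hνb x h))]
  exact ⟨key, by rw [← key.image_eq, Set.ncard_image_of_injOn key.injOn]⟩
end

section
/- For a sequence A = (a₁, a₂, a₃, ...) of positive integers, the conjugates of partitions λ satisfying 'a_i divides the multiplicity of i in λ for all i' are exactly the partitions μ = (μ₁ ≥ μ₂ ≥ ...) satisfying μ_i ≡ μ_{i+1} (mod a_i) for all i (where μ_j = 0 beyond the length). -/
lemma aux_getD_le (l : List ℕ) (h : l.Pairwise (· ≥ ·)) {j k : ℕ} (hjk : j ≤ k) :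
    l.getD k 0 ≤ l.getD j 0 := by
  by_cases hk : k < l.length
  · have hj : j < l.length := lt_of_le_of_lt hjk hk
    rw [List.getD_eq_getElem _ _ hk, List.getD_eq_getElem _ _ hj]
    exact List.Pairwise.rel_get_of_le h hjk
  · rw [List.getD_eq_default _ _ (le_of_not_gt hk)]
    exact Nat.zero_le _

lemma aux_mem_le_head (l : List ℕ) (h : l.Pairwise (· ≥ ·)) {y : ℕ} (hy : y ∈ l) :
    y ≤ l.getD 0 0 := by
  cases l with
  | nil => simp at hy
  | cons x xs =>
    rcases List.mem_cons.mp hy with h' | h'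
    · simp [h']
    · simpa using List.rel_of_pairwise_cons h h'

lemma aux_countP_split (l : List ℕ) (j : ℕ) :
    l.countP (fun x => decide (j + 1 ≤ x)) =
      l.countP (fun x => decide (j + 2 ≤ x)) + l.count (j+1) := by
  induction l with
  | nil => simp
  | cons x xs ih =>
    simp only [List.countP_cons, List.count_cons, ih]
    rcases Nat.lt_trichotomy x (j+1) with h | h | h
    · have h1 : ¬ (j+1 ≤ x) := by omega
      have h2 : ¬ (j+2 ≤ x) := by omega
      have h3 : ¬ (x = j+1) := by omega
      simp [h1, h2, h3]
    · simp [h]; omega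
    · have h1 : j+1 ≤ x := by omega
      have h2 : j+2 ≤ x := by omega
      have h3 : ¬ (x = j+1) := by omega
      simp [h1, h2, h3]; omega

lemma aux_getD_le_of_forall (l : List ℕ) {c : ℕ} (h : ∀ y ∈ l, y ≤ c) (j : ℕ) :
    l.getD j 0 ≤ c := by
  by_cases hj : j < l.length
  · rw [List.getD_eq_getElem _ _ hj]
    exact h _ (List.getElem_mem hj)
  · rw [List.getD_eq_default _ _ (le_of_not_gt hj)]
    exact Nat.zero_le _

lemma aux_countP_ge_iff {k : ℕ} (hk : 0 < k) (l : List ℕ) (hs : l.Pairwise (· ≥ ·)) (j : ℕ) :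
    (j + 1 ≤ l.countP (fun x => decide (k ≤ x))) ↔ k ≤ l.getD j 0 := by
  induction l generalizing j with
  | nil => simp; omega
  | cons x xs ih =>
    have hs' : xs.Pairwise (· ≥ ·) := hs.of_cons
    by_cases hx : k ≤ x
    · rw [List.countP_cons_of_pos (by simpa using hx)]
      cases j with
      | zero => simp [hx]
      | succ j => simpa using ih hs' j
    · have hall : ∀ y ∈ x :: xs, ¬ (k ≤ y) := by
        intro y hy
        have := aux_mem_le_head _ hs hy
        simp at this
        omega
      have hc : (x :: xs).countP (fun x => decide (k ≤ x)) = 0 := by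
        rw [List.countP_eq_zero]
        intro y hy
        simpa using hall y hy
      rw [hc]
      have : (x :: xs).getD j 0 ≤ x := aux_getD_le_of_forall _
        (fun y hy => aux_mem_le_head _ hs hy) j
      simp at this ⊢
      omega

lemma aux_conj_length (l : List ℕ) : (conj l).length = l.getD 0 0 := by
  unfold conj; simp

lemma aux_conj_getD (l : List ℕ) (h : l.Pairwise (· ≥ ·)) (j : ℕ) :
    (conj l).getD j 0 = l.countP (fun x => decide (j + 1 ≤ x)) := by
  unfold conj
  by_cases hj : j < l.getD 0 0
  · rw [List.getD_eq_getElem _ _ (by simpa using hj)]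
    simp
  · rw [List.getD_eq_default _ _ (by simpa using le_of_not_gt hj)]
    symm
    rw [List.countP_eq_zero]
    intro y hy
    have := aux_mem_le_head l h hy
    simp
    omega

lemma aux_conj_partition (l : List ℕ) (h : IsPartition l) : IsPartition (conj l) := by
  obtain ⟨hs, hp⟩ := h
  constructor
  · unfold conj
    rw [List.pairwise_map]
    apply List.Pairwise.imp_of_mem ?_ List.pairwise_lt_range
    intro i j _ _ hij
    exact List.countP_mono_left (fun x _ hx => by simp at hx ⊢; omega)
  · intro x hx
    unfold conj at hx
    simp only [List.mem_map, List.mem_range] at hx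
    obtain ⟨i, hi, rfl⟩ := hx
    rw [List.countP_pos_iff]
    cases l with
    | nil => simp at hi
    | cons y ys =>
      refine ⟨y, List.mem_cons_self, ?_⟩
      simp at hi ⊢
      omega

lemma aux_range_countP (M t : ℕ) (h : t ≤ M) :
    (List.range M).countP (fun i => decide (i < t)) = t := by
  induction M with
  | zero => simp; omega
  | succ M ih =>
    rw [List.range_succ, List.countP_append]
    by_cases ht : t ≤ M
    · rw [ih ht]
      simp [Nat.not_lt.mpr ht]
    · have ht' : t = M + 1 := by omega
      subst ht'
      rw [List.countP_eq_length.mpr (by intro x hx; simp at hx ⊢; omega)]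
      simp

lemma aux_conj_conj (l : List ℕ) (h : IsPartition l) : conj (conj l) = l := by
  obtain ⟨hs, hp⟩ := h
  have hkey : ∀ j, (conj (conj l)).getD j 0 = l.getD j 0 := by
    intro j
    rw [aux_conj_getD (conj l) (aux_conj_partition l ⟨hs, hp⟩).1 j]
    unfold conj
    rw [List.countP_map]
    rw [List.countP_congr (q := fun i => decide (i < l.getD j 0)) ?_]
    · exact aux_range_countP _ _ (aux_getD_le l hs (Nat.zero_le j))
    · intro i _
      have := aux_countP_ge_iff (Nat.succ_pos i) l hs j
      simp only [Function.comp_apply, decide_eq_true_eq, Nat.succ_eq_add_one] at this ⊢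
      rw [this]
      omega
  have hlen : (conj (conj l)).length = l.length := by
    rw [aux_conj_length, aux_conj_getD l hs 0]
    apply List.countP_eq_length.mpr
    intro x hx
    have := hp x hx; simp; omega
  apply List.ext_getElem hlen
  intro i h1 h2
  rw [← List.getD_eq_getElem _ 0 h1, ← List.getD_eq_getElem _ 0 h2]
  exact hkey i

theorem stmt15 (a : ℕ → ℕ) (ha : ∀ i, 0 < a i) :
    conj '' {l : List ℕ | IsPartition l ∧ ∀ i, 0 < i → a i ∣ l.count i}
      = {l : List ℕ | IsPartition l ∧ ∀ j, l.getD j 0 ≡ l.getD (j+1) 0 [MOD a (j+1)]} := by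
  ext m
  simp only [Set.mem_image, Set.mem_setOf_eq]
  constructor
  · rintro ⟨l, ⟨hl, hdiv⟩, rfl⟩
    refine ⟨aux_conj_partition l hl, ?_⟩
    intro j
    rw [aux_conj_getD l hl.1 j, aux_conj_getD l hl.1 (j+1)]
    have hsplit := aux_countP_split l j
    have hd : a (j+1) ∣ l.count (j+1) := hdiv (j+1) (Nat.succ_pos j)
    rw [hsplit]
    have : l.countP (fun x => decide (j+1+1 ≤ x)) = l.countP (fun x => decide (j+2 ≤ x)) := by
      rfl
    rw [this]
    exact ((Nat.modEq_iff_dvd' (Nat.le_add_right _ _)).mpr (by simpa using hd)).symm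
  · rintro ⟨hm, hcong⟩
    refine ⟨conj m, ⟨aux_conj_partition m hm, ?_⟩, aux_conj_conj m hm⟩
    intro i hi
    obtain ⟨j, rfl⟩ : ∃ j, i = j + 1 := ⟨i - 1, by omega⟩
    have h1 := aux_countP_split (conj m) j
    have h2 : (conj m).countP (fun x => decide (j+1 ≤ x)) = m.getD j 0 := by
      rw [← aux_conj_getD (conj m) (aux_conj_partition m hm).1 j, aux_conj_conj m hm]
    have h3 : (conj m).countP (fun x => decide (j+2 ≤ x)) = m.getD (j+1) 0 := by
      rw [← aux_conj_getD (conj m) (aux_conj_partition m hm).1 (j+1), aux_conj_conj m hm]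
    have hle : m.getD (j+1) 0 ≤ m.getD j 0 := aux_getD_le m hm.1 (Nat.le_succ j)
    have hdvd : a (j+1) ∣ m.getD j 0 - m.getD (j+1) 0 :=
      (Nat.modEq_iff_dvd' hle).mp (hcong j).symm
    have hcount : (conj m).count (j+1) = m.getD j 0 - m.getD (j+1) 0 := by omega
    rw [hcount]
    exact hdvd
end

section
/- For |x| < 1 and |q| < 1, the two-variable generating function identity ∏_{n≥1} 1/(1 − xⁿ q^{n²}) = Σ over frequency congruent partitions λ of x^{ℓ(λ)} q^{|λ|} holds, where ℓ(λ) is the number of parts and |λ| the sum of parts. -/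
open Finset Filter

-- ===== auxiliary combinatorics =====
/-- multiset of the partition attached to a finsupp -/
def fcMS (f : ℕ →₀ ℕ) : Multiset ℕ :=
  ∑ i ∈ f.support, Multiset.replicate ((i + 1) * f i) (i + 1)

def fcList (f : ℕ →₀ ℕ) : List ℕ := Multiset.sort (fcMS f) (· ≥ ·)

lemma count_fcMS (f : ℕ →₀ ℕ) (j : ℕ) : Multiset.count (j + 1) (fcMS f) = (j + 1) * f j := by
  unfold fcMS
  rw [Multiset.count_sum']
  simp only [Multiset.count_replicate]
  rw [Finset.sum_eq_single j]
  · simp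
  · intro b _ hb; simp [hb, Nat.succ_injective.ne hb]
  · intro hj; simp [Finsupp.notMem_support_iff.1 hj]

lemma count_fcMS_zero (f : ℕ →₀ ℕ) : Multiset.count 0 (fcMS f) = 0 := by
  unfold fcMS
  rw [Multiset.count_sum']
  simp [Multiset.count_replicate]

lemma count_fcList' (f : ℕ →₀ ℕ) (a : ℕ) : (fcList f).count a = Multiset.count a (fcMS f) := by
  rw [fcList, ← Multiset.coe_count, Multiset.sort_eq]

lemma count_fcList (f : ℕ →₀ ℕ) (j : ℕ) : (fcList f).count (j + 1) = (j + 1) * f j := by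
  rw [count_fcList', count_fcMS]

lemma count_fcList_zero (f : ℕ →₀ ℕ) : (fcList f).count 0 = 0 := by
  rw [count_fcList', count_fcMS_zero]

lemma fcList_isPartition (f : ℕ →₀ ℕ) : IsPartition (fcList f) := by
  constructor
  · exact Multiset.pairwise_sort _ _
  · intro x hx
    have : x ∈ fcMS f := by rwa [← Multiset.mem_sort (r := (· ≥ ·))]
    unfold fcMS at this
    rw [Multiset.mem_sum] at this
    obtain ⟨i, _, hi⟩ := this
    rw [Multiset.eq_of_mem_replicate hi]
    omega

lemma fcList_freqCongruent (f : ℕ →₀ ℕ) : FreqCongruent (fcList f) := by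
  intro i hi
  obtain ⟨j, rfl⟩ := Nat.exists_eq_add_of_lt hi
  rw [Nat.zero_add, count_fcList]
  exact Dvd.intro _ rfl

lemma fcList_length (f : ℕ →₀ ℕ) : (fcList f).length = ∑ i ∈ f.support, (i + 1) * f i := by
  rw [fcList, Multiset.length_sort, fcMS]
  induction f.support using Finset.induction with
  | empty => simp
  | insert _ _ h ih => simp [Finset.sum_insert h, ih]

lemma fcList_sum (f : ℕ →₀ ℕ) : (fcList f).sum = ∑ i ∈ f.support, (i + 1) * f i * (i + 1) := by
  have : (fcList f).sum = (fcMS f).sum := by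
    rw [fcList, ← Multiset.sum_coe, Multiset.sort_eq]
  rw [this, fcMS]
  induction f.support using Finset.induction with
  | empty => simp
  | insert _ _ h ih => simp [Finset.sum_insert h, ih, Multiset.sum_replicate, smul_eq_mul]

/-- from a list, the finsupp of scaled frequencies -/
noncomputable def toFinsupp (l : List ℕ) : ℕ →₀ ℕ :=
  Finsupp.onFinset (l.toFinset.image (· - 1)) (fun i => l.count (i + 1) / (i + 1))
    (by
      intro i hi
      have : l.count (i + 1) ≠ 0 := by
        intro h; rw [h] at hi; simp at hi
      rw [Finset.mem_image]
      exact ⟨i + 1, List.mem_toFinset.2 (List.count_pos_iff.1 (Nat.pos_of_ne_zero this)), rfl⟩)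

lemma toFinsupp_apply (l : List ℕ) (i : ℕ) : toFinsupp l i = l.count (i + 1) / (i + 1) := rfl

noncomputable def fcEquiv : {l : List ℕ // IsPartition l ∧ FreqCongruent l} ≃ (ℕ →₀ ℕ) where
  toFun l := toFinsupp l.1
  invFun f := ⟨fcList f, fcList_isPartition f, fcList_freqCongruent f⟩
  left_inv := by
    rintro ⟨l, ⟨hs, hp⟩, hfc⟩
    ext1
    dsimp only
    refine List.Perm.eq_of_pairwise' (Multiset.pairwise_sort _ _) hs (List.perm_iff_count.2 ?_)
    intro a
    cases a with
    | zero =>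
      rw [count_fcList_zero]
      symm
      rw [List.count_eq_zero]
      intro h; exact absurd (hp 0 h) (lt_irrefl 0)
    | succ j =>
      rw [count_fcList, toFinsupp_apply, Nat.mul_div_cancel' (hfc (j + 1) j.succ_pos)]
  right_inv := by
    intro f
    ext i
    rw [toFinsupp_apply, count_fcList, Nat.mul_div_cancel_left _ i.succ_pos]
-- ===== analytic =====

lemma hasSum_finPi_zero {M : Type*} [NormedField M] (b : ℕ → M) :
    HasSum (fun g : Fin 0 → ℕ => ∏ j : Fin 0, b j ^ g j) 1 := by
  have : ∀ g : Fin 0 → ℕ, (g ≠ fun i => i.elim0) → (∏ j : Fin 0, b j ^ g j) = 0 := fun g hg =>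
    absurd (funext fun i => i.elim0) hg
  simpa using hasSum_single (f := fun g : Fin 0 → ℕ => ∏ j : Fin 0, b j ^ g j)
    (fun i => Fin.elim0 i) this

lemma succ_step {𝕜 : Type*} [NormedField 𝕜] [CompleteSpace 𝕜] (N : ℕ) (b : ℕ → 𝕜)
    (h0 : HasSum (fun k : ℕ => b 0 ^ k) (1 - b 0)⁻¹)
    (hIH : HasSum (fun g : Fin N → ℕ => ∏ j : Fin N, b (j + 1) ^ g j)
      (∏ n ∈ range N, (1 - b (n + 1))⁻¹))
    (h0n : Summable (fun k : ℕ => ‖b 0 ^ k‖))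
    (hIHn : Summable (fun g : Fin N → ℕ => ‖∏ j : Fin N, b (j + 1) ^ g j‖)) :
    HasSum (fun g : Fin (N + 1) → ℕ => ∏ j : Fin (N + 1), b j ^ g j)
      (∏ n ∈ range (N + 1), (1 - b n)⁻¹) := by
  have hs := summable_mul_of_summable_norm h0n hIHn
  have hmul := h0.mul hIH hs
  rw [Finset.prod_range_succ', mul_comm]
  refine ((Fin.consEquiv (fun _ : Fin (N+1) => ℕ)).hasSum_iff).mp ?_
  have heq : ((fun g : Fin (N + 1) → ℕ => ∏ j : Fin (N + 1), b j ^ g j)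
      ∘ (Fin.consEquiv (fun _ : Fin (N+1) => ℕ)))
      = fun p : ℕ × (Fin N → ℕ) => b 0 ^ p.1 * ∏ j : Fin N, b (j + 1) ^ p.2 j := by
    funext p
    simp [Fin.consEquiv, Fin.prod_univ_succ]
  rw [heq]
  exact hmul

lemma hasSum_finPi_real (N : ℕ) (c : ℕ → ℝ) (hc0 : ∀ n, 0 ≤ c n) (hc1 : ∀ n, c n < 1) :
    HasSum (fun g : Fin N → ℕ => ∏ j : Fin N, c j ^ g j)
      (∏ n ∈ range N, (1 - c n)⁻¹) := by
  induction N generalizing c with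
  | zero => simpa using hasSum_finPi_zero c
  | succ N ih =>
    have h0 : HasSum (fun k : ℕ => c 0 ^ k) (1 - c 0)⁻¹ := by
      have := hasSum_geometric_of_lt_one (hc0 0) (hc1 0)
      simpa using this
    have hIH : HasSum (fun g : Fin N → ℕ => ∏ j : Fin N, c (j + 1) ^ g j)
        (∏ n ∈ range N, (1 - c (n + 1))⁻¹) :=
      ih (fun n => c (n + 1)) (fun n => hc0 (n + 1)) (fun n => hc1 (n + 1))
    have h0n : Summable (fun k : ℕ => ‖c 0 ^ k‖) := by
      refine h0.summable.congr fun k => ?_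
      rw [Real.norm_eq_abs, abs_of_nonneg (pow_nonneg (hc0 0) k)]
    have hIHn : Summable (fun g : Fin N → ℕ => ‖∏ j : Fin N, c (j + 1) ^ g j‖) := by
      refine hIH.summable.congr fun g => ?_
      rw [Real.norm_eq_abs, abs_of_nonneg]
      exact Finset.prod_nonneg fun j _ => pow_nonneg (hc0 _) _
    exact succ_step N c h0 hIH h0n hIHn

lemma hasSum_finPi (N : ℕ) (b : ℕ → ℂ) (hb : ∀ n, ‖b n‖ < 1) :
    HasSum (fun g : Fin N → ℕ => ∏ j : Fin N, b j ^ g j)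
      (∏ n ∈ range N, (1 - b n)⁻¹) := by
  induction N generalizing b with
  | zero => simpa using hasSum_finPi_zero b
  | succ N ih =>
    have h0 : HasSum (fun k : ℕ => b 0 ^ k) (1 - b 0)⁻¹ :=
      hasSum_geometric_of_norm_lt_one (hb 0)
    have hIH : HasSum (fun g : Fin N → ℕ => ∏ j : Fin N, b (j + 1) ^ g j)
        (∏ n ∈ range N, (1 - b (n + 1))⁻¹) :=
      ih (fun n => b (n + 1)) (fun n => hb (n + 1))
    have h0n : Summable (fun k : ℕ => ‖b 0 ^ k‖) := by
      simp only [norm_pow]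
      exact summable_geometric_of_lt_one (norm_nonneg _) (hb 0)
    have hIHn : Summable (fun g : Fin N → ℕ => ‖∏ j : Fin N, b (j + 1) ^ g j‖) := by
      have hr := hasSum_finPi_real N (fun n => ‖b (n + 1)‖) (fun n => norm_nonneg _)
        (fun n => hb (n + 1))
      refine hr.summable.congr fun g => ?_
      simp [norm_prod, norm_pow]
    exact succ_step N b h0 hIH h0n hIHn

noncomputable def extFinsupp (N : ℕ) (g : Fin N → ℕ) : ℕ →₀ ℕ :=
  Finsupp.onFinset (range N) (fun n => if h : n < N then g ⟨n, h⟩ else 0)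
    (fun n hn => by
      rw [Finset.mem_range]
      by_contra h
      simp only [dif_neg h] at hn
      exact hn rfl)

lemma extFinsupp_apply_lt (N : ℕ) (g : Fin N → ℕ) (j : Fin N) :
    extFinsupp N g j = g j := by
  simp [extFinsupp, Finsupp.onFinset_apply, j.isLt]

lemma extFinsupp_apply_ge (N : ℕ) (g : Fin N → ℕ) (n : ℕ) (h : ¬ n < N) :
    extFinsupp N g n = 0 := by
  simp [extFinsupp, Finsupp.onFinset_apply, h]

lemma extFinsupp_injective (N : ℕ) : Function.Injective (extFinsupp N) := by
  intro g g' h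
  funext j
  have := congrArg (fun f : ℕ →₀ ℕ => f j) h
  simpa [extFinsupp_apply_lt] using this

lemma extFinsupp_surj_on (N : ℕ) (f : ℕ →₀ ℕ) (h : ∀ i ∈ f.support, i < N) :
    f ∈ Set.range (extFinsupp N) := by
  refine ⟨fun j => f j, ?_⟩
  ext n
  by_cases hn : n < N
  · exact extFinsupp_apply_lt N _ ⟨n, hn⟩
  · rw [extFinsupp_apply_ge N _ n hn]
    by_contra h'
    exact hn (h n (Finsupp.mem_support_iff.2 fun he => h' he.symm))

noncomputable def Gfun {𝕜 : Type*} [NormedField 𝕜] (b : ℕ → 𝕜) (N : ℕ) (f : ℕ →₀ ℕ) : 𝕜 :=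
  if ∀ i ∈ f.support, i < N then ∏ i ∈ f.support, b i ^ f i else 0

lemma Gfun_comp_ext {𝕜 : Type*} [NormedField 𝕜] (b : ℕ → 𝕜) (N : ℕ) (g : Fin N → ℕ) :
    Gfun b N (extFinsupp N g) = ∏ j : Fin N, b j ^ g j := by
  have hsupp : ∀ i ∈ (extFinsupp N g).support, i < N := by
    intro i hi
    by_contra h
    exact Finsupp.mem_support_iff.1 hi (extFinsupp_apply_ge N g i h)
  rw [Gfun, if_pos hsupp]
  rw [Finset.prod_subset (fun i hi => Finset.mem_range.2 (hsupp i hi))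
    (fun i _ hi => by rw [Finsupp.notMem_support_iff.1 hi, pow_zero])]
  rw [← Fin.prod_univ_eq_prod_range]
  exact Finset.prod_congr rfl fun j _ => by rw [extFinsupp_apply_lt]

lemma hasSum_Gfun {𝕜 : Type*} [NormedField 𝕜] (b : ℕ → 𝕜) (N : ℕ) (P : 𝕜)
    (h : HasSum (fun g : Fin N → ℕ => ∏ j : Fin N, b j ^ g j) P) :
    HasSum (Gfun b N) P := by
  refine (Function.Injective.hasSum_iff (extFinsupp_injective N) fun f hf => ?_).mp ?_
  · rw [Gfun, if_neg]
    intro hall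
    exact hf (extFinsupp_surj_on N f hall)
  · have he : (Gfun b N ∘ extFinsupp N) = fun g : Fin N → ℕ => ∏ j : Fin N, b j ^ g j :=
      funext (Gfun_comp_ext b N)
    rw [he]
    exact h
section real
variable (c : ℕ → ℝ) (r : ℝ) (hr : r < 1) (hc0 : ∀ n, 0 ≤ c n) (hcr : ∀ n, c n ≤ r)
  (hs : Summable c)

include hr hc0 hcr hs in
lemma prod_bound (N : ℕ) : ∏ n ∈ range N, (1 - c n)⁻¹ ≤ Real.exp (∑' n, c n / (1 - r)) := by
  have hr0 : (0:ℝ) < 1 - r := by linarith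
  have hc1 : ∀ n, c n < 1 := fun n => lt_of_le_of_lt (hcr n) hr
  have hd : Summable (fun n => c n / (1 - r)) := hs.div_const _
  calc ∏ n ∈ range N, (1 - c n)⁻¹
      ≤ ∏ n ∈ range N, Real.exp (c n / (1 - r)) := by
        refine Finset.prod_le_prod (fun n _ => inv_nonneg.2 (by linarith [hc1 n])) ?_
        intro n _
        have h1 : (0:ℝ) < 1 - c n := by linarith [hc1 n]
        have : (1 - c n)⁻¹ = 1 + c n / (1 - c n) := by field_simp; ring
        rw [this]
        have h2 : c n / (1 - c n) ≤ c n / (1 - r) := by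
          apply div_le_div_of_nonneg_left (hc0 n) hr0
          linarith [hcr n]
        calc 1 + c n / (1 - c n) ≤ 1 + c n / (1 - r) := by linarith
          _ ≤ Real.exp (c n / (1 - r)) := by linarith [Real.add_one_le_exp (c n / (1 - r))]
    _ = Real.exp (∑ n ∈ range N, c n / (1 - r)) := (Real.exp_sum _ _).symm
    _ ≤ Real.exp (∑' n, c n / (1 - r)) := by
        apply Real.exp_le_exp.2
        exact Summable.sum_le_tsum _ (fun i _ => div_nonneg (hc0 i) hr0.le) hd

include hr hc0 hcr hs in
lemma summable_F_real : Summable (fun f : ℕ →₀ ℕ => ∏ i ∈ f.support, c i ^ f i) := by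
  have hc1 : ∀ n, c n < 1 := fun n => lt_of_le_of_lt (hcr n) hr
  refine summable_of_sum_le (c := Real.exp (∑' n, c n / (1 - r)))
    (fun f => Finset.prod_nonneg fun i _ => pow_nonneg (hc0 i) _) ?_
  intro u
  set N := (u.sup fun f => f.support.sup id) + 1 with hN
  have hlt : ∀ f ∈ u, ∀ i ∈ f.support, i < N := by
    intro f hf i hi
    have h1 : i ≤ f.support.sup id := Finset.le_sup (f := id) hi
    have h2 : f.support.sup id ≤ u.sup fun f => f.support.sup id :=
      Finset.le_sup (f := fun f : ℕ →₀ ℕ => f.support.sup id) hf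
    omega
  have hG := hasSum_Gfun c N _ (hasSum_finPi_real N c hc0 hc1)
  have hle : ∑ f ∈ u, ∏ i ∈ f.support, c i ^ f i ≤ ∏ n ∈ range N, (1 - c n)⁻¹ := by
    have : ∑ f ∈ u, ∏ i ∈ f.support, c i ^ f i = ∑ f ∈ u, Gfun c N f := by
      refine Finset.sum_congr rfl fun f hf => ?_
      rw [Gfun, if_pos (hlt f hf)]
    rw [this]
    refine sum_le_hasSum u (fun f _ => ?_) hG
    rw [Gfun]
    split
    · exact Finset.prod_nonneg fun i _ => pow_nonneg (hc0 i) _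
    · exact le_refl 0
  exact hle.trans (prod_bound c r hr hc0 hcr hs N)
end real
theorem prod_eq_tsum_finsupp (b : ℕ → ℂ) (r : ℝ) (hr : r < 1) (hbr : ∀ n, ‖b n‖ ≤ r)
    (hs : Summable fun n => ‖b n‖) :
    (∏' n, (1 - b n)⁻¹) = ∑' f : ℕ →₀ ℕ, ∏ i ∈ f.support, b i ^ f i := by
  have hr0 : (0:ℝ) ≤ r := (norm_nonneg (b 0)).trans (hbr 0)
  have h1r : (0:ℝ) < 1 - r := by linarith
  have hb1 : ∀ n, ‖b n‖ < 1 := fun n => lt_of_le_of_lt (hbr n) hr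
  have hne : ∀ n, (1 : ℂ) - b n ≠ 0 := by
    intro n h
    have : ‖(1:ℂ) - b n‖ = 0 := by rw [h, norm_zero]
    have h2 : (1:ℝ) - ‖b n‖ ≤ ‖(1:ℂ) - b n‖ := by
      calc (1:ℝ) - ‖b n‖ = ‖(1:ℂ)‖ - ‖b n‖ := by rw [norm_one]
        _ ≤ ‖(1:ℂ) - b n‖ := norm_sub_norm_le _ _
    linarith [hb1 n]
  have hnorm_inv : ∀ n, ‖((1:ℂ) - b n)⁻¹ - 1‖ ≤ ‖b n‖ / (1 - r) := by
    intro n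
    have h1 : ((1:ℂ) - b n)⁻¹ - 1 = b n * ((1:ℂ) - b n)⁻¹ := by
      linear_combination mul_inv_cancel₀ (hne n)
    rw [h1, norm_mul, norm_inv]
    have h2 : (1:ℝ) - r ≤ ‖(1:ℂ) - b n‖ := by
      calc (1:ℝ) - r ≤ 1 - ‖b n‖ := by linarith [hbr n]
        _ = ‖(1:ℂ)‖ - ‖b n‖ := by rw [norm_one]
        _ ≤ ‖(1:ℂ) - b n‖ := norm_sub_norm_le _ _
    rw [div_eq_mul_inv]
    gcongr

  -- Multipliable
  have hmult : Multipliable (fun n => ((1:ℂ) - b n)⁻¹) := by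
    refine Complex.multipliable_of_summable_log ?_
    refine Summable.of_norm_bounded_eventually (g := fun n => 3/2 * (‖b n‖ / (1 - r))) ?_ ?_
    · exact ((hs.div_const (1 - r)).mul_left (3/2))
    · rw [Nat.cofinite_eq_atTop]
      have htend : Tendsto (fun n => ‖b n‖) atTop (nhds 0) := hs.tendsto_atTop_zero
      have hev : ∀ᶠ n in atTop, ‖b n‖ / (1 - r) ≤ 1/2 := by
        have := htend.eventually_le_const (show (0:ℝ) < (1-r)/2 by linarith)
        filter_upwards [this] with n hn
        rw [div_le_iff₀ h1r]
        linarith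
      filter_upwards [hev] with n hn
      have hz : ‖((1:ℂ) - b n)⁻¹ - 1‖ ≤ 1/2 := (hnorm_inv n).trans hn
      have h3 : ((1:ℂ) - b n)⁻¹ = 1 + (((1:ℂ) - b n)⁻¹ - 1) := by ring
      calc ‖Complex.log (((1:ℂ) - b n)⁻¹)‖
          = ‖Complex.log (1 + (((1:ℂ) - b n)⁻¹ - 1))‖ := by rw [← h3]
        _ ≤ 3/2 * ‖((1:ℂ) - b n)⁻¹ - 1‖ := Complex.norm_log_one_add_half_le_self hz
        _ ≤ 3/2 * (‖b n‖ / (1 - r)) := by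
            have := hnorm_inv n; gcongr
  -- summability over finsupps
  have hsum_norm : Summable (fun f : ℕ →₀ ℕ => ∏ i ∈ f.support, ‖b i‖ ^ f i) :=
    summable_F_real _ r hr (fun n => norm_nonneg _) hbr hs
  have hsumF : Summable (fun f : ℕ →₀ ℕ => ∏ i ∈ f.support, b i ^ f i) := by
    refine Summable.of_norm ?_
    refine hsum_norm.congr fun f => ?_
    simp [norm_prod, norm_pow]
  -- dominated convergence
  have hdom : Tendsto (fun N => ∑' f : ℕ →₀ ℕ, Gfun b N f) atTop
      (nhds (∑' f : ℕ →₀ ℕ, ∏ i ∈ f.support, b i ^ f i)) := by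
    refine tendsto_tsum_of_dominated_convergence hsum_norm ?_ ?_
    · intro f
      obtain ⟨N₀, hN₀⟩ := Finset.exists_nat_subset_range f.support
      refine tendsto_atTop_of_eventually_const (i₀ := N₀) fun N hN => ?_
      rw [Gfun, if_pos]
      intro i hi
      exact lt_of_lt_of_le (Finset.mem_range.1 (hN₀ hi)) hN
    · refine Eventually.of_forall fun N f => ?_
      rw [Gfun]
      split
      · rw [norm_prod]
        exact le_of_eq (Finset.prod_congr rfl fun i _ => norm_pow _ _)
      · simpa using Finset.prod_nonneg fun i (_ : i ∈ f.support) => pow_nonneg (norm_nonneg (b i)) (f i)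
  have hpart : ∀ N, ∑' f : ℕ →₀ ℕ, Gfun b N f = ∏ n ∈ range N, (1 - b n)⁻¹ := fun N =>
    (hasSum_Gfun b N _ (hasSum_finPi N b hb1)).tsum_eq
  have hdom' : Tendsto (fun N => ∏ n ∈ range N, ((1:ℂ) - b n)⁻¹) atTop
      (nhds (∑' f : ℕ →₀ ℕ, ∏ i ∈ f.support, b i ^ f i)) := by
    refine hdom.congr fun N => hpart N
  exact tendsto_nhds_unique hmult.hasProd.tendsto_prod_nat hdom'
-- ===== final assembly =====

lemma term_eq (x q : ℂ) (s : Finset ℕ) (g : ℕ → ℕ) :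
    (∏ i ∈ s, (x ^ (i + 1) * q ^ ((i + 1) ^ 2)) ^ g i)
      = x ^ (∑ i ∈ s, (i + 1) * g i) * q ^ (∑ i ∈ s, (i + 1) * g i * (i + 1)) := by
  rw [← Finset.prod_pow_eq_pow_sum, ← Finset.prod_pow_eq_pow_sum, ← Finset.prod_mul_distrib]
  refine Finset.prod_congr rfl fun i _ => ?_
  rw [mul_pow, ← pow_mul, ← pow_mul]
  congr 1
  ring

theorem stmt18 (x q : ℂ) (hx : ‖x‖ < 1) (hq : ‖q‖ < 1) :
    (∏' n : ℕ, (1 - x ^ (n + 1) * q ^ ((n + 1) ^ 2))⁻¹)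
      = ∑' l : {l : List ℕ // IsPartition l ∧ FreqCongruent l},
          x ^ (l : List ℕ).length * q ^ (l : List ℕ).sum := by
  have hx' : ‖x‖ < 1 := by exact hx
  have hq' : ‖q‖ < 1 := by exact hq
  set b : ℕ → ℂ := fun n => x ^ (n + 1) * q ^ ((n + 1) ^ 2) with hb
  have hbr : ∀ n, ‖b n‖ ≤ ‖x‖ := by
    intro n
    rw [hb]
    simp only [norm_mul, norm_pow]
    calc ‖x‖ ^ (n + 1) * ‖q‖ ^ ((n + 1) ^ 2)
        ≤ ‖x‖ ^ (n + 1) * 1 := by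
          gcongr
          exact pow_le_one₀ (norm_nonneg q) hq'.le
      _ = ‖x‖ ^ (n + 1) := mul_one _
      _ ≤ ‖x‖ ^ 1 := pow_le_pow_of_le_one (norm_nonneg x) hx'.le (by omega)
      _ = ‖x‖ := pow_one _
  have hsb : Summable fun n => ‖b n‖ := by
    refine Summable.of_nonneg_of_le (fun n => norm_nonneg _) (fun n => ?_)
      ((summable_geometric_of_lt_one (norm_nonneg x) hx').mul_right ‖x‖)
    rw [hb]
    simp only [norm_mul, norm_pow]
    calc ‖x‖ ^ (n + 1) * ‖q‖ ^ ((n + 1) ^ 2)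
        ≤ ‖x‖ ^ (n + 1) * 1 := by
          gcongr
          exact pow_le_one₀ (norm_nonneg q) hq'.le
      _ = ‖x‖ ^ n * ‖x‖ := by rw [mul_one, pow_succ]
  rw [prod_eq_tsum_finsupp b ‖x‖ hx' hbr hsb]
  rw [← Equiv.tsum_eq fcEquiv.symm
    (fun l : {l : List ℕ // IsPartition l ∧ FreqCongruent l} =>
      x ^ (l : List ℕ).length * q ^ (l : List ℕ).sum)]
  refine tsum_congr fun g => ?_
  show (∏ i ∈ g.support, b i ^ g i) = x ^ (fcList g).length * q ^ (fcList g).sum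
  rw [fcList_length, fcList_sum, hb]
  exact term_eq x q g.support g
end
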